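/- arXiv:2507.10872 — 7 statements merged into one kernel-verified Lean document; each statement's English description precedes it below -/
import Mathlib

section
/- In every market in which the number of couriers is at least the minimum of the number of buyers and the number of stores (l ≥ min{m,n}), a without-tip equilibrium exists. -/
open scoped Classical
noncomputable section

namespace DeliveryPlatform

variable {m n l : ℕ}

/-- A (three-sided) allocation `x` is feasible if each buyer, each store and each
courier appears in at most one executed triple. -/
def Feasible (x : Fin m → Fin n → Fin l → Bool) : Prop :=
  (∀ b s d s' d', x b s d → x b s' d' → s = s' ∧ d = d') ∧
  (∀ b s d b' d', x b s d → x b' s d' → b = b' ∧ d = d') ∧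
  (∀ b s d b' s', x b s d → x b' s' d → b = b' ∧ s = s')

/-- The welfare of an allocation: `W(x) = Σ x_{bsd} (v_b(s) − c_d(b,s))`. -/
def Welfare (v : Fin m → Fin n → ℝ) (c : Fin l → Fin m → Fin n → ℝ)
    (x : Fin m → Fin n → Fin l → Bool) : ℝ :=
  ∑ b, ∑ s, ∑ d, if x b s d then v b s - c d b s else 0

/-- The optimal welfare over all feasible allocations. -/
def OPT (v : Fin m → Fin n → ℝ) (c : Fin l → Fin m → Fin n → ℝ) : ℝ :=
  sSup {r : ℝ | ∃ x, Feasible x ∧ Welfare v c x = r}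

/-- Utility of courier `d` from delivering the order `(b,s)`:
`w_{bs} + t_{bs} − c_d(b,s)`. -/
def cUtil (c : Fin l → Fin m → Fin n → ℝ) (w t : Fin m → Fin n → ℝ)
    (d : Fin l) (b : Fin m) (s : Fin n) : ℝ :=
  w b s + t b s - c d b s

/-- `(b,s) ∈ BR_d(w,t)`: the order `(b,s)` is utility-maximizing for courier `d`
and has nonnegative utility. -/
def InBR (c : Fin l → Fin m → Fin n → ℝ) (w t : Fin m → Fin n → ℝ)
    (d : Fin l) (b : Fin m) (s : Fin n) : Prop :=
  0 ≤ cUtil c w t d b s ∧ ∀ b' s', cUtil c w t d b' s' ≤ cUtil c w t d b s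

/-- Replace buyer `b`'s tip vector by `tb`, keeping the tips of all other
buyers (`t_{−b}`) fixed. -/
def updateTips (t : Fin m → Fin n → ℝ) (b : Fin m) (tb : Fin n → ℝ) :
    Fin m → Fin n → ℝ :=
  fun b' s' => if b' = b then tb s' else t b' s'

/-- The minimum tip `t̲_{bs}(w, t_{−b})`: the smallest nonnegative tip that buyer `b`
can attach to the order `(b,s)` (as part of some nonnegative tip vector)
so that `(b,s) ∈ BR_d` for some courier `d`. -/
def minTip (c : Fin l → Fin m → Fin n → ℝ) (w t : Fin m → Fin n → ℝ)
    (b : Fin m) (s : Fin n) : ℝ :=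
  sInf {τ : ℝ | 0 ≤ τ ∧ ∃ tb : Fin n → ℝ, (∀ s', 0 ≤ tb s') ∧ tb s = τ ∧
    ∃ d, InBR c w (updateTips t b tb) d b s}

/-- A with-tip equilibrium `(p, w, t, x)`. -/
def WithTipEq (v : Fin m → Fin n → ℝ) (c : Fin l → Fin m → Fin n → ℝ)
    (p : Fin n → ℝ) (w t : Fin m → Fin n → ℝ)
    (x : Fin m → Fin n → Fin l → Bool) : Prop :=
  Feasible x ∧
  (∀ s, 0 ≤ p s) ∧ (∀ b s, 0 ≤ w b s) ∧ (∀ b s, 0 ≤ t b s) ∧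
  -- every matched buyer buys from a utility-maximizing store, with nonnegative
  -- utility, and pays exactly the minimum tip for the store she buys from
  (∀ b s, (∃ d, x b s d) →
    0 ≤ v b s - p s - minTip c w t b s ∧
    (∀ s', v b s' - p s' - minTip c w t b s' ≤ v b s - p s - minTip c w t b s) ∧
    t b s = minTip c w t b s) ∧
  -- an unmatched buyer finds no store of positive utility
  (∀ b, (∀ s d, ¬ x b s d) → ∀ s, v b s - p s - minTip c w t b s ≤ 0) ∧
  -- every courier delivers an order in BR_d(w,t)
  (∀ d b s, x b s d → InBR c w t d b s) ∧
  (∀ d, (∀ b s, ¬ x b s d) → ∀ b s, cUtil c w t d b s ≤ 0) ∧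
  -- stores not bought from have zero purchase price
  (∀ s, (∀ b d, ¬ x b s d) → p s = 0) ∧
  -- orders not delivered have zero compensation and zero tip
  (∀ b s, (∀ d, ¬ x b s d) → w b s = 0 ∧ t b s = 0)

/-- A without-tip equilibrium `(p, w, x)`. -/
def WithoutTipEq (v : Fin m → Fin n → ℝ) (c : Fin l → Fin m → Fin n → ℝ)
    (p : Fin n → ℝ) (w : Fin m → Fin n → ℝ)
    (x : Fin m → Fin n → Fin l → Bool) : Prop :=
  Feasible x ∧
  (∀ s, 0 ≤ p s) ∧ (∀ b s, 0 ≤ w b s) ∧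
  (∀ b s, (∃ d, x b s d) →
    0 ≤ v b s - p s ∧ ∀ s', v b s' - p s' ≤ v b s - p s) ∧
  (∀ b, (∀ s d, ¬ x b s d) → ∀ s, v b s - p s ≤ 0) ∧
  (∀ d b s, x b s d →
    0 ≤ w b s - c d b s ∧ ∀ b' s', w b' s' - c d b' s' ≤ w b s - c d b s) ∧
  (∀ d, (∀ b s, ¬ x b s d) → ∀ b s, w b s - c d b s ≤ 0) ∧
  (∀ s, (∀ b d, ¬ x b s d) → p s = 0) ∧
  (∀ b s, (∀ d, ¬ x b s d) → w b s = 0)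

section AuxiliaryLemmas
open Finset

/-- Inner rematching lemma for the Mendelsohn–Dulmage argument. -/
lemma md_inner {B S : Type*} [DecidableEq B] [DecidableEq S] [Fintype S]
    (R : B → S → Prop) (P : Finset S) (g : S → B)
    (hginj : Set.InjOn g P) (hgR : ∀ s ∈ P, R (g s) s) :
    ∀ (k : ℕ) (A : Finset B) (f : B → S), Set.InjOn f A → (∀ b ∈ A, R b (f b)) →
      ∀ s0, s0 ∈ P → s0 ∉ A.image f →
      (P.filter (fun s => ¬(g s ∈ A ∧ f (g s) = s))).card ≤ k →
      ∃ (A' : Finset B) (f' : B → S), A ⊆ A' ∧ Set.InjOn f' A' ∧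
        (∀ b ∈ A', R b (f' b)) ∧
        (A'.image f' = insert s0 (A.image f) ∨
         ∃ t, t ∉ P ∧ A'.image f' = (insert s0 (A.image f)).erase t) := by
  intro k
  induction k with
  | zero =>
    intro A f hfinj hfR s0 hs0P hs0im hcard
    exfalso
    have hmem : s0 ∈ P.filter (fun s => ¬(g s ∈ A ∧ f (g s) = s)) := by
      refine mem_filter.2 ⟨hs0P, ?_⟩
      rintro ⟨hgA, hfg⟩
      exact hs0im (mem_image.2 ⟨g s0, hgA, hfg⟩)
    have := card_pos.2 ⟨s0, hmem⟩
    omega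
  | succ k ih =>
    intro A f hfinj hfR s0 hs0P hs0im hcard
    set b0 := g s0 with hb0
    by_cases hb0A : b0 ∈ A
    · -- rematch b0 to s0
      set s1 := f b0 with hs1
      set f1 := Function.update f b0 s0 with hf1
      have hs1im : s1 ∈ A.image f := mem_image.2 ⟨b0, hb0A, rfl⟩
      have hs1ne : s1 ≠ s0 := fun h => hs0im (h ▸ hs1im)
      have hf1inj : Set.InjOn f1 A := by
        intro a ha a' ha' hEq
        by_cases h1 : a = b0 <;> by_cases h2 : a' = b0
        · exact h1.trans h2.symm
        · exfalso
          rw [hf1] at hEq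
          rw [h1] at hEq
          rw [Function.update_self, Function.update_of_ne h2] at hEq
          exact hs0im (hEq ▸ mem_image.2 ⟨a', ha', rfl⟩)
        · exfalso
          rw [hf1] at hEq
          rw [h2] at hEq
          rw [Function.update_self, Function.update_of_ne h1] at hEq
          exact hs0im (hEq ▸ mem_image.2 ⟨a, ha, rfl⟩)
        · rw [hf1, Function.update_of_ne h1, Function.update_of_ne h2] at hEq
          exact hfinj ha ha' hEq
      have hf1R : ∀ b ∈ A, R b (f1 b) := by
        intro b hb
        by_cases h : b = b0
        · rw [h, hf1, Function.update_self]
          exact hgR s0 hs0P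
        · rw [hf1, Function.update_of_ne h]
          exact hfR b hb
      have himage : A.image f1 = insert s0 ((A.image f).erase s1) := by
        ext t
        simp only [mem_image, mem_insert, mem_erase]
        constructor
        · rintro ⟨b, hb, rfl⟩
          by_cases h : b = b0
          · left; rw [h, hf1, Function.update_self]
          · right
            rw [hf1, Function.update_of_ne h]
            refine ⟨?_, ⟨b, hb, rfl⟩⟩
            intro hEq
            exact h (hfinj hb hb0A (hEq.trans hs1))
        · rintro (rfl | ⟨hne, b, hb, rfl⟩)
          · exact ⟨b0, hb0A, by rw [hf1, Function.update_self]⟩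
          · refine ⟨b, hb, ?_⟩
            rw [hf1, Function.update_of_ne]
            intro h
            exact hne (by rw [h])
        -- done
      by_cases hs1P : s1 ∈ P
      · -- recurse
        have hs1im1 : s1 ∉ A.image f1 := by
          rw [himage]
          simp [hs1ne]
        have hcard1 : (P.filter (fun s => ¬(g s ∈ A ∧ f1 (g s) = s))).card ≤ k := by
          have hsub : P.filter (fun s => ¬(g s ∈ A ∧ f1 (g s) = s)) ⊆
              (P.filter (fun s => ¬(g s ∈ A ∧ f (g s) = s))).erase s0 := by
            intro s hs
            rcases mem_filter.1 hs with ⟨hsP, hbad⟩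
            refine mem_erase.2 ⟨?_, mem_filter.2 ⟨hsP, ?_⟩⟩
            · rintro rfl
              exact hbad ⟨hb0A, by rw [hf1, Function.update_self]⟩
            · rintro ⟨hgsA, hfgs⟩
              have hgs : g s ≠ b0 := by
                intro h
                have : s = s0 := hginj hsP hs0P h
                subst this
                exact hbad ⟨hb0A, by rw [hf1, Function.update_self]⟩
              exact hbad ⟨hgsA, by rw [hf1, Function.update_of_ne hgs]; exact hfgs⟩
          have hs0mem : s0 ∈ P.filter (fun s => ¬(g s ∈ A ∧ f (g s) = s)) := by
            refine mem_filter.2 ⟨hs0P, ?_⟩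
            rintro ⟨hgA, hfg⟩
            exact hs0im (mem_image.2 ⟨g s0, hgA, hfg⟩)
          calc (P.filter (fun s => ¬(g s ∈ A ∧ f1 (g s) = s))).card
              ≤ ((P.filter (fun s => ¬(g s ∈ A ∧ f (g s) = s))).erase s0).card :=
                card_le_card hsub
            _ = (P.filter (fun s => ¬(g s ∈ A ∧ f (g s) = s))).card - 1 :=
                card_erase_of_mem hs0mem
            _ ≤ k := by omega
        obtain ⟨A', f', hAA', hinj', hR', him'⟩ :=
          ih A f1 hf1inj hf1R s1 hs1P hs1im1 hcard1
        refine ⟨A', f', hAA', hinj', hR', ?_⟩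
        have key : insert s1 (A.image f1) = insert s0 (A.image f) := by
          rw [himage]
          rw [Finset.insert_comm]
          rw [Finset.insert_erase hs1im]
        rcases him' with h | ⟨t, htP, ht⟩
        · left; rw [h, key]
        · right
          refine ⟨t, htP, ?_⟩
          rw [ht, key]
      · -- s1 ∉ P : stop
        refine ⟨A, f1, Finset.Subset.refl A, hf1inj, hf1R, Or.inr ⟨s1, hs1P, ?_⟩⟩
        rw [himage, Finset.erase_insert_of_ne hs1ne.symm]
    · -- extend the matching with b0 ↦ s0
      refine ⟨insert b0 A, Function.update f b0 s0, subset_insert _ _, ?_, ?_, Or.inl ?_⟩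
      · intro a ha a' ha' hEq
        simp only [coe_insert, Set.mem_insert_iff, mem_coe] at ha ha'
        by_cases h1 : a = b0 <;> by_cases h2 : a' = b0
        · exact h1.trans h2.symm
        · exfalso
          rw [h1, Function.update_self, Function.update_of_ne h2] at hEq
          rcases ha' with rfl | ha'
          · exact h2 rfl
          · exact hs0im (hEq ▸ mem_image.2 ⟨a', ha', rfl⟩)
        · exfalso
          rw [h2, Function.update_self, Function.update_of_ne h1] at hEq
          rcases ha with rfl | ha
          · exact h1 rfl
          · exact hs0im (hEq ▸ mem_image.2 ⟨a, ha, rfl⟩)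
        · rcases ha with rfl | ha
          · exact absurd rfl h1
          · rcases ha' with rfl | ha'
            · exact absurd rfl h2
            · rw [Function.update_of_ne h1, Function.update_of_ne h2] at hEq
              exact hfinj ha ha' hEq
      · intro b hb
        rcases mem_insert.1 hb with rfl | hb
        · rw [Function.update_self]; exact hgR s0 hs0P
        · have hbne : b ≠ b0 := fun h => hb0A (h ▸ hb)
          rw [Function.update_of_ne hbne]
          exact hfR b hb
      · rw [Finset.image_insert, Function.update_self]
        congr 1
        apply Finset.image_congr
        intro b hb
        have hbne : b ≠ b0 := fun h => hb0A (h ▸ hb)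
        exact Function.update_of_ne hbne _ _

/-- Mendelsohn–Dulmage type lemma: given a matching saturating `H` and one
saturating `P`, there is a matching saturating both. -/
lemma mendelsohn_dulmage {B S : Type*} [DecidableEq B] [DecidableEq S] [Fintype S]
    (R : B → S → Prop) (H : Finset B) (P : Finset S)
    (F : B → S) (hF : Set.InjOn F H) (hFR : ∀ b ∈ H, R b (F b))
    (g : S → B) (hg : Set.InjOn g P) (hgR : ∀ s ∈ P, R (g s) s) :
    ∃ (A : Finset B) (f : B → S), H ⊆ A ∧ Set.InjOn f A ∧
      (∀ b ∈ A, R b (f b)) ∧ P ⊆ A.image f := by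
  suffices h : ∀ (j : ℕ) (A : Finset B) (f : B → S), Set.InjOn f A →
      (∀ b ∈ A, R b (f b)) → H ⊆ A → (P \ A.image f).card ≤ j →
      ∃ (A' : Finset B) (f' : B → S), H ⊆ A' ∧ Set.InjOn f' A' ∧
        (∀ b ∈ A', R b (f' b)) ∧ P ⊆ A'.image f' by
    exact h (P \ H.image F).card H F hF hFR (Finset.Subset.refl H) le_rfl
  intro j
  induction j with
  | zero =>
    intro A f hinj hR hHA hcard
    refine ⟨A, f, hHA, hinj, hR, ?_⟩
    intro s hs
    by_contra hsim
    have : s ∈ P \ A.image f := mem_sdiff.2 ⟨hs, hsim⟩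
    have := card_pos.2 ⟨s, this⟩
    omega
  | succ j ih =>
    intro A f hinj hR hHA hcard
    by_cases hP : P ⊆ A.image f
    · exact ⟨A, f, hHA, hinj, hR, hP⟩
    · obtain ⟨s0, hs0⟩ : (P \ A.image f).Nonempty := by
        rw [Finset.sdiff_nonempty]; exact hP
      rcases mem_sdiff.1 hs0 with ⟨hs0P, hs0im⟩
      obtain ⟨A', f', hAA', hinj', hR', him'⟩ :=
        md_inner R P g hg hgR (P.filter (fun s => ¬(g s ∈ A ∧ f (g s) = s))).card
          A f hinj hR s0 hs0P hs0im le_rfl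
      have hsub : P \ A'.image f' ⊆ (P \ A.image f).erase s0 := by
        intro s hs
        rcases mem_sdiff.1 hs with ⟨hsP, hsim⟩
        rcases him' with h | ⟨t, htP, ht⟩
        · rw [h] at hsim
          simp only [mem_insert, not_or] at hsim
          exact mem_erase.2 ⟨hsim.1, mem_sdiff.2 ⟨hsP, hsim.2⟩⟩
        · rw [ht] at hsim
          have hst : s ≠ t := fun h => htP (h ▸ hsP)
          have : s ∉ insert s0 (A.image f) := by
            intro hmem
            exact hsim (mem_erase.2 ⟨hst, hmem⟩)
          simp only [mem_insert, not_or] at this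
          exact mem_erase.2 ⟨this.1, mem_sdiff.2 ⟨hsP, this.2⟩⟩
      have hcard' : (P \ A'.image f').card ≤ j := by
        have h1 : s0 ∈ P \ A.image f := mem_sdiff.2 ⟨hs0P, hs0im⟩
        calc (P \ A'.image f').card ≤ ((P \ A.image f).erase s0).card := card_le_card hsub
          _ = (P \ A.image f).card - 1 := card_erase_of_mem h1
          _ ≤ j := by omega
      exact ih A' f' hinj' hR' (hHA.trans hAA') hcard'

/-- Existence of a competitive equilibrium in a two-sided assignment market. -/
lemma exists_assignment_equilibrium {B S : Type*} [Fintype B] [Fintype S]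
    [DecidableEq B] [DecidableEq S]
    (u : B → S → ℝ) (hu : ∀ b s, 0 ≤ u b s) :
    ∃ (p : S → ℝ) (μ : B → Option S),
      (∀ s, 0 ≤ p s) ∧
      (∀ b b' s, μ b = some s → μ b' = some s → b = b') ∧
      (∀ b s, μ b = some s → 0 ≤ u b s - p s ∧ ∀ s', u b s' - p s' ≤ u b s - p s) ∧
      (∀ b, μ b = none → ∀ s, u b s - p s ≤ 0) ∧
      (∀ s, (∀ b, μ b ≠ some s) → p s = 0) := by
  by_cases hS : Nonempty S
  swap
  · refine ⟨fun _ => 0, fun _ => none, fun s => le_rfl, ?_, ?_, ?_, ?_⟩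
    · intro b b' s h; exact absurd ⟨s⟩ hS
    · intro b s h; exact absurd ⟨s⟩ hS
    · intro b _ s; exact absurd ⟨s⟩ hS
    · intro s; exact absurd ⟨s⟩ hS
  by_cases hB : Nonempty B
  swap
  · refine ⟨fun _ => 0, fun _ => none, fun s => le_rfl, ?_, ?_, ?_, ?_⟩
    · intro b; exact absurd ⟨b⟩ hB
    · intro b; exact absurd ⟨b⟩ hB
    · intro b; exact absurd ⟨b⟩ hB
    · intro s _; rfl
  have hSne : (Finset.univ : Finset S).Nonempty := Finset.univ_nonempty
  have hBne : (Finset.univ : Finset B).Nonempty := Finset.univ_nonempty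
  set M : ℝ := 1 + ∑ b, ∑ s, u b s with hM
  have hMu : ∀ b s, u b s ≤ M - 1 := by
    intro b s
    have h1 : u b s ≤ ∑ s', u b s' :=
      Finset.single_le_sum (fun i _ => hu b i) (mem_univ s)
    have h2 : ∑ s', u b s' ≤ ∑ b', ∑ s', u b' s' :=
      Finset.single_le_sum (fun i (_ : i ∈ univ) => Finset.sum_nonneg fun j _ => hu i j)
        (mem_univ b)
    simp only [hM]; linarith
  have hM1 : (1:ℝ) ≤ M := by
    have : (0:ℝ) ≤ ∑ b, ∑ s, u b s :=
      Finset.sum_nonneg fun i _ => Finset.sum_nonneg fun j _ => hu i j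
    simp only [hM]; linarith
  set θ : ℝ := 1 / (Fintype.card B + 1) with hθ
  have hθpos : 0 < θ := by positivity
  have hθB : θ * (Fintype.card B) < 1 := by
    rw [hθ, div_mul_eq_mul_div, div_lt_one (by positivity)]
    linarith
  set box : Set (S → ℝ) := Set.Icc 0 (fun _ => M) with hbox
  have hboxc : IsCompact box := isCompact_Icc
  have hboxne : box.Nonempty := ⟨0, le_rfl, fun s => by dsimp; linarith⟩
  set β : (S → ℝ) → B → ℝ := fun p b => max 0 (univ.sup' hSne fun s => u b s - p s) with hβdef
  set G : (S → ℝ) → ℝ := fun p => (1 + θ) * ∑ s, p s + ∑ b, β p b with hG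
  have hGcont : Continuous G := by
    apply Continuous.add
    · exact continuous_const.mul (continuous_finset_sum _ fun s _ => continuous_apply s)
    · apply continuous_finset_sum
      intro b _
      exact continuous_const.max
        (Continuous.finset_sup'_apply hSne fun s _ =>
          continuous_const.sub (continuous_apply s))
  obtain ⟨p, hpbox, hmin⟩ := hboxc.exists_isMinOn hboxne hGcont.continuousOn
  have hp0 : ∀ s, 0 ≤ p s := fun s => hpbox.1 s
  have hpM : ∀ s, p s ≤ M := fun s => hpbox.2 s
  set βs : B → ℝ := fun b => β p b with hβs
  have hβ0 : ∀ b, 0 ≤ βs b := fun b => le_max_left _ _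
  have hβub : ∀ b s, u b s - p s ≤ βs b := fun b s =>
    le_trans (Finset.le_sup' (fun s => u b s - p s) (mem_univ s)) (le_max_right _ _)
  set D : B → Finset S := fun b => univ.filter fun s => u b s - p s = βs b with hD
  have hDmem : ∀ b s, s ∈ D b ↔ u b s - p s = βs b := by
    intro b s; simp [hD]
  have hDne : ∀ b, 0 < βs b → (D b).Nonempty := by
    intro b hb
    obtain ⟨s, _, hs⟩ := Finset.exists_mem_eq_sup' hSne (fun s => u b s - p s)
    refine ⟨s, (hDmem b s).2 ?_⟩
    have hXpos : 0 < univ.sup' hSne fun s => u b s - p s := by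
      by_contra h
      push_neg at h
      have : βs b = 0 := by
        show max 0 _ = 0
        exact max_eq_left h
      rw [this] at hb; exact lt_irrefl _ hb
    have hβX : βs b = univ.sup' hSne fun s => u b s - p s :=
      max_eq_right hXpos.le
    rw [hβX, hs]
  -- Hall condition for the hungry buyers
  have hallH : ∀ A : Finset B, (∀ b ∈ A, 0 < βs b) → A.card ≤ (A.biUnion D).card := by
    intro A hA
    by_contra hlt
    push_neg at hlt
    set N := A.biUnion D with hN
    have hAne : A.Nonempty := card_pos.1 (by omega)
    have hprodne : (A ×ˢ (univ : Finset S)).Nonempty := hAne.product hSne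
    set ε : ℝ := min 1 ((A ×ˢ (univ : Finset S)).inf' hprodne fun q =>
        if q.2 ∈ D q.1 then βs q.1 else min (βs q.1) (βs q.1 - (u q.1 q.2 - p q.2))) with hε
    have hεpos : 0 < ε := by
      refine lt_min one_pos ?_
      rw [Finset.lt_inf'_iff]
      rintro ⟨b, s⟩ hq
      rw [Finset.mem_product] at hq
      have hbβ : 0 < βs b := hA b hq.1
      by_cases hs : s ∈ D b
      · simpa [hs] using hbβ
      · have hne' : u b s - p s ≠ βs b := fun h => hs ((hDmem b s).2 h)
        have hlt' : u b s - p s < βs b := lt_of_le_of_ne (hβub b s) hne'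
        simp only [hs, if_false]
        exact lt_min hbβ (by linarith)
    have hε1 : ε ≤ 1 := min_le_left _ _
    have hεβ : ∀ b ∈ A, ε ≤ βs b := by
      intro b hb
      obtain ⟨s, _⟩ := hSne
      have h := Finset.inf'_le (b := (b, s)) (fun q : B × S =>
          if q.2 ∈ D q.1 then βs q.1 else min (βs q.1) (βs q.1 - (u q.1 q.2 - p q.2)))
        (Finset.mem_product.2 ⟨hb, mem_univ s⟩)
      refine le_trans (min_le_right _ _) (le_trans h ?_)
      by_cases hsD : s ∈ D b <;> simp [hsD]
    have hεgap : ∀ b ∈ A, ∀ s, s ∉ D b → ε ≤ βs b - (u b s - p s) := by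
      intro b hb s hs
      have h := Finset.inf'_le (b := (b, s)) (fun q : B × S =>
          if q.2 ∈ D q.1 then βs q.1 else min (βs q.1) (βs q.1 - (u q.1 q.2 - p q.2)))
        (Finset.mem_product.2 ⟨hb, mem_univ s⟩)
      refine le_trans (min_le_right _ _) (le_trans h ?_)
      simp [hs]
    set q : S → ℝ := fun s => if s ∈ N then p s + ε else p s with hq
    have hqbox : q ∈ box := by
      refine ⟨fun s => ?_, fun s => ?_⟩
      · show (0:ℝ) ≤ q s
        by_cases h : s ∈ N <;> simp only [hq, h, if_true, if_false] <;>
          [linarith [hp0 s, hεpos]; exact hp0 s]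
      · show q s ≤ M
        by_cases h : s ∈ N
        · obtain ⟨b, hbA, hsD⟩ := Finset.mem_biUnion.1 h
          have heq : u b s - p s = βs b := (hDmem b s).1 hsD
          have h1 := hMu b s
          have h2 := hβ0 b
          simp only [hq, h, if_true]
          linarith
        · simp only [hq, h, if_false]; exact hpM s
    have hβq1 : ∀ b ∈ A, β q b ≤ βs b - ε := by
      intro b hb
      have h0 : 0 ≤ βs b - ε := by linarith [hεβ b hb]
      refine max_le h0 (Finset.sup'_le _ _ fun s _ => ?_)
      by_cases h : s ∈ N
      · simp only [hq, h, if_true]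
        have := hβub b s; linarith
      · have hsD : s ∉ D b := fun hc => h (Finset.mem_biUnion.2 ⟨b, hb, hc⟩)
        simp only [hq, h, if_false]
        have := hεgap b hb s hsD; linarith
    have hβq2 : ∀ b, β q b ≤ βs b := by
      intro b
      refine max_le (hβ0 b) (Finset.sup'_le _ _ fun s _ => ?_)
      have hpq : p s ≤ q s := by
        by_cases h : s ∈ N <;> simp only [hq, h, if_true, if_false] <;> linarith
      have := hβub b s; linarith
    have hsumq : ∑ s, q s = (∑ s, p s) + ε * N.card := by
      have h1 : ∀ s ∈ univ, q s = p s + (if s ∈ N then ε else 0) := by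
        intro s _
        by_cases h : s ∈ N <;> simp [hq, h]
      rw [Finset.sum_congr rfl h1, Finset.sum_add_distrib]
      congr 1
      rw [Finset.sum_ite_mem, Finset.univ_inter, Finset.sum_const, nsmul_eq_mul, mul_comm]
    have hsumβ : ∑ b, β q b ≤ (∑ b, βs b) - ε * A.card := by
      have h1 : ∑ b, β q b ≤ ∑ b, (βs b - if b ∈ A then ε else 0) := by
        refine Finset.sum_le_sum fun b _ => ?_
        by_cases h : b ∈ A
        · simp only [h, if_true]; exact hβq1 b h
        · simp only [h, if_false, sub_zero]; exact hβq2 b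
      have h2 : ∑ b, (βs b - if b ∈ A then ε else 0)
          = (∑ b, βs b) - ε * A.card := by
        rw [Finset.sum_sub_distrib]
        congr 1
        rw [Finset.sum_ite_mem, Finset.univ_inter, Finset.sum_const, nsmul_eq_mul, mul_comm]
      linarith
    have hcontr : G q < G p := by
      have hcardN : (N.card : ℝ) ≤ (A.card : ℝ) - 1 := by
        have : N.card + 1 ≤ A.card := hlt
        have := (Nat.cast_le (α := ℝ)).2 this
        push_cast at this ⊢
        linarith
      have hθA : θ * (A.card : ℝ) ≤ θ * (Fintype.card B : ℝ) := by
        refine mul_le_mul_of_nonneg_left ?_ hθpos.le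
        exact_mod_cast Finset.card_le_univ A
      have hGq : G q = (1 + θ) * ∑ s, q s + ∑ b, β q b := rfl
      have hGp : G p = (1 + θ) * ∑ s, p s + ∑ b, βs b := rfl
      rw [hGq, hGp, hsumq]
      have hA0 : (0:ℝ) ≤ (A.card : ℝ) := Nat.cast_nonneg _
      have h1 : (1+θ)*ε*(N.card:ℝ) ≤ (1+θ)*ε*((A.card:ℝ)-1) :=
        mul_le_mul_of_nonneg_left hcardN (by positivity)
      have h2 : ε*(θ*(A.card:ℝ)) ≤ ε*(θ*(Fintype.card B:ℝ)) :=
        mul_le_mul_of_nonneg_left hθA hεpos.le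
      have h3 : ε*(θ*(Fintype.card B:ℝ)) < ε*1 := by
        exact mul_lt_mul_of_pos_left hθB hεpos
      nlinarith [hsumβ, h1, h2, h3]
    exact absurd (hmin hqbox) (not_le.2 hcontr)
  -- Hall condition (with room to spare) for positively priced stores
  have hallP : ∀ Q : Finset S, (∀ s ∈ Q, 0 < p s) →
      Q.card ≤ (univ.filter fun b => ∃ s ∈ Q, s ∈ D b).card := by
    intro Q hQ
    by_contra hlt
    push_neg at hlt
    set T := univ.filter fun b => ∃ s ∈ Q, s ∈ D b with hT
    have hQne : Q.Nonempty := card_pos.1 (by omega)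
    have hprodne : ((univ : Finset B) ×ˢ (univ : Finset S)).Nonempty :=
      hBne.product hSne
    set ε : ℝ := min (Q.inf' hQne p) ((univ ×ˢ univ).inf' hprodne fun q =>
        if q.2 ∈ D q.1 then 1 else βs q.1 - (u q.1 q.2 - p q.2)) with hε
    have hεpos : 0 < ε := by
      refine lt_min ?_ ?_
      · rw [Finset.lt_inf'_iff]; exact hQ
      · rw [Finset.lt_inf'_iff]
        rintro ⟨b, s⟩ _
        by_cases hs : s ∈ D b
        · simpa [hs] using one_pos
        · have hne' : u b s - p s ≠ βs b := fun h => hs ((hDmem b s).2 h)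
          have := lt_of_le_of_ne (hβub b s) hne'
          simp only [hs, if_false]; linarith
    have hεp : ∀ s ∈ Q, ε ≤ p s := fun s hs =>
      le_trans (min_le_left _ _) (Finset.inf'_le p hs)
    have hεgap : ∀ b s, s ∉ D b → ε ≤ βs b - (u b s - p s) := by
      intro b s hs
      have h := Finset.inf'_le (b := (b, s)) (fun q : B × S =>
          if q.2 ∈ D q.1 then 1 else βs q.1 - (u q.1 q.2 - p q.2))
        (Finset.mem_product.2 ⟨mem_univ b, mem_univ s⟩)
      refine le_trans (min_le_right _ _) (le_trans h ?_)
      simp [hs]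
    set q : S → ℝ := fun s => if s ∈ Q then p s - ε else p s with hq
    have hqbox : q ∈ box := by
      refine ⟨fun s => ?_, fun s => ?_⟩
      · show (0:ℝ) ≤ q s
        simp only [hq]
        split_ifs with h
        · linarith [hεp s h]
        · exact hp0 s
      · show q s ≤ M
        simp only [hq]
        split_ifs with h
        · linarith [hpM s, hεpos]
        · exact hpM s
    have hβq : ∀ b, β q b ≤ βs b + (if b ∈ T then ε else 0) := by
      intro b
      by_cases hb : b ∈ T
      · simp only [hb, if_true]
        refine max_le (by linarith [hβ0 b, hεpos]) (Finset.sup'_le _ _ fun s _ => ?_)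
        have h1 : p s - ε ≤ q s := by
          simp only [hq]; split_ifs <;> linarith
        have := hβub b s; linarith
      · simp only [hb, if_false, add_zero]
        refine max_le (hβ0 b) (Finset.sup'_le _ _ fun s _ => ?_)
        by_cases hsQ : s ∈ Q
        · have hsD : s ∉ D b := fun hc =>
            hb (mem_filter.2 ⟨mem_univ b, ⟨s, hsQ, hc⟩⟩)
          have := hεgap b s hsD
          simp only [hq, hsQ, if_true]
          linarith
        · simp only [hq, hsQ, if_false]; exact hβub b s
    have hsumq : ∑ s, q s = (∑ s, p s) - ε * Q.card := by
      have h1 : ∀ s ∈ univ, q s = p s - (if s ∈ Q then ε else 0) := by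
        intro s _
        simp only [hq]; split_ifs <;> simp
      rw [Finset.sum_congr rfl h1, Finset.sum_sub_distrib]
      congr 1
      rw [Finset.sum_ite_mem, Finset.univ_inter, Finset.sum_const, nsmul_eq_mul, mul_comm]
    have hsumβ : ∑ b, β q b ≤ (∑ b, βs b) + ε * T.card := by
      have h1 : ∑ b, β q b ≤ ∑ b, (βs b + if b ∈ T then ε else 0) :=
        Finset.sum_le_sum fun b _ => hβq b
      have h2 : ∑ b, (βs b + if b ∈ T then ε else 0)
          = (∑ b, βs b) + ε * T.card := by
        rw [Finset.sum_add_distrib]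
        congr 1
        rw [Finset.sum_ite_mem, Finset.univ_inter, Finset.sum_const, nsmul_eq_mul, mul_comm]
      linarith
    have hcontr : G q < G p := by
      have hcardT : (T.card : ℝ) ≤ (Q.card : ℝ) - 1 := by
        have : T.card + 1 ≤ Q.card := hlt
        have := (Nat.cast_le (α := ℝ)).2 this
        push_cast at this ⊢
        linarith
      have hGq : G q = (1 + θ) * ∑ s, q s + ∑ b, β q b := rfl
      have hGp : G p = (1 + θ) * ∑ s, p s + ∑ b, βs b := rfl
      rw [hGq, hGp, hsumq]
      have hQ0 : (0:ℝ) ≤ (Q.card : ℝ) := Nat.cast_nonneg _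
      have h2 : 0 ≤ ε*(θ*(Q.card:ℝ)) := by positivity
      nlinarith [hsumβ, h2, hεpos]
    exact absurd (hmin hqbox) (not_le.2 hcontr)
  -- the two sides of the market
  set Hset : Finset B := univ.filter fun b => 0 < βs b with hHset
  set Pset : Finset S := univ.filter fun s => 0 < p s with hPset
  have hhallH : ∀ (A : Finset ↥Hset), A.card ≤ (A.biUnion fun b => D b.1).card := by
    intro A
    have h1 : (A.image Subtype.val).card = A.card :=
      Finset.card_image_of_injective _ Subtype.val_injective
    have h2 : A.biUnion (fun b => D b.1) = (A.image Subtype.val).biUnion D := by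
      ext s; simp [Finset.mem_biUnion]
    rw [h2, ← h1]
    apply hallH
    intro b hb
    simp only [Finset.mem_image] at hb
    obtain ⟨b', _, rfl⟩ := hb
    exact (mem_filter.1 b'.2).2
  obtain ⟨F, hFinj, hFmem⟩ :=
    (Finset.all_card_le_biUnion_card_iff_exists_injective (fun b : ↥Hset => D b.1)).1 hhallH
  have hhallP : ∀ (Q : Finset ↥Pset),
      Q.card ≤ (Q.biUnion fun s => univ.filter fun b => s.1 ∈ D b).card := by
    intro Q
    have h1 : (Q.image Subtype.val).card = Q.card :=
      Finset.card_image_of_injective _ Subtype.val_injective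
    have h2 : Q.biUnion (fun s => univ.filter fun b => s.1 ∈ D b)
        = univ.filter fun b => ∃ s ∈ Q.image Subtype.val, s ∈ D b := by
      ext b; simp [Finset.mem_biUnion]
    rw [h2, ← h1]
    apply hallP
    intro s hs
    simp only [Finset.mem_image] at hs
    obtain ⟨s', _, rfl⟩ := hs
    exact (mem_filter.1 s'.2).2
  obtain ⟨Gm, hGinj, hGmem⟩ :=
    (Finset.all_card_le_biUnion_card_iff_exists_injective
      (fun s : ↥Pset => univ.filter fun b => s.1 ∈ D b)).1 hhallP
  obtain ⟨sdef⟩ := hS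
  obtain ⟨bdef⟩ := hB
  set Fbar : B → S := fun b => if h : b ∈ Hset then F ⟨b, h⟩ else sdef with hFbar
  set gbar : S → B := fun s => if h : s ∈ Pset then Gm ⟨s, h⟩ else bdef with hgbar
  have hFbarinj : Set.InjOn Fbar Hset := by
    intro a ha a' ha' hEq
    rw [Finset.mem_coe] at ha ha'
    simp only [hFbar, dif_pos ha, dif_pos ha'] at hEq
    exact Subtype.ext_iff.1 (hFinj hEq)
  have hFbarR : ∀ b ∈ Hset, Fbar b ∈ D b := by
    intro b hb
    simp only [hFbar, dif_pos hb]
    exact hFmem ⟨b, hb⟩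
  have hgbarinj : Set.InjOn gbar Pset := by
    intro a ha a' ha' hEq
    rw [Finset.mem_coe] at ha ha'
    simp only [hgbar, dif_pos ha, dif_pos ha'] at hEq
    exact Subtype.ext_iff.1 (hGinj hEq)
  have hgbarR : ∀ s ∈ Pset, s ∈ D (gbar s) := by
    intro s hs
    simp only [hgbar, dif_pos hs]
    have := hGmem ⟨s, hs⟩
    simpa using this
  obtain ⟨A, f, hHA, hinjA, hRA, hPim⟩ :=
    mendelsohn_dulmage (fun b s => s ∈ D b) Hset Pset Fbar hFbarinj hFbarR
      gbar hgbarinj hgbarR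
  set μ : B → Option S := fun b => if b ∈ A then some (f b) else none with hμdef
  have hμ : ∀ b s, μ b = some s ↔ b ∈ A ∧ f b = s := by
    intro b s
    simp only [hμdef]
    split_ifs with h <;> simp [h]
  refine ⟨p, μ, hp0, ?_, ?_, ?_, ?_⟩
  · intro b b' s h h'
    rw [hμ] at h h'
    exact hinjA h.1 h'.1 (h.2.trans h'.2.symm)
  · intro b s h
    rw [hμ] at h
    obtain ⟨hbA, rfl⟩ := h
    have hD' : f b ∈ D b := hRA b hbA
    have heq : u b (f b) - p (f b) = βs b := (hDmem b (f b)).1 hD'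
    exact ⟨by rw [heq]; exact hβ0 b, fun s' => by rw [heq]; exact hβub b s'⟩
  · intro b h s
    have hbA : b ∉ A := by
      intro hbA
      rw [hμdef] at h
      simp [hbA] at h
    have hbH : b ∉ Hset := fun hc => hbA (hHA hc)
    have : ¬ 0 < βs b := fun hc => hbH (mem_filter.2 ⟨mem_univ b, hc⟩)
    have hβle : βs b ≤ 0 := not_lt.1 this
    linarith [hβub b s]
  · intro s h
    have hsP : s ∉ Pset := by
      intro hsP
      obtain ⟨b, hbA, hfb⟩ := Finset.mem_image.1 (hPim hsP)
      exact h b ((hμ b s).2 ⟨hbA, hfb⟩)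
    have : ¬ 0 < p s := fun hc => hsP (mem_filter.2 ⟨mem_univ s, hc⟩)
    linarith [hp0 s]

end AuxiliaryLemmas

/-- If `l ≥ min{m,n}`, a without-tip equilibrium exists. -/
theorem without_tip_equilibrium_exists
    (v : Fin m → Fin n → ℝ) (c : Fin l → Fin m → Fin n → ℝ)
    (hv : ∀ b s, 0 ≤ v b s) (hc : ∀ d b s, 0 ≤ c d b s)
    (hl : min m n ≤ l) :
    ∃ (p : Fin n → ℝ) (w : Fin m → Fin n → ℝ) (x : Fin m → Fin n → Fin l → Bool),
      WithoutTipEq v c p w x := by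
  -- Step 1: equilibrium in the buyer–store market
  obtain ⟨p, μ, hp0, hμinj, hμmat, hμunmat, hpstore⟩ :=
    exists_assignment_equilibrium v hv
  -- the set of executed orders
  set O := {q : Fin m × Fin n // μ q.1 = some q.2} with hO
  -- Step 2: equilibrium in the order–courier market
  set K : ℝ := 1 + ∑ d, ∑ b, ∑ s, c d b s with hK
  have hKc : ∀ (d : Fin l) (b : Fin m) (s : Fin n), c d b s ≤ K - 1 := by
    intro d b s
    have h1 : c d b s ≤ ∑ s', c d b s' :=
      Finset.single_le_sum (fun i _ => hc d b i) (Finset.mem_univ s)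
    have h2 : ∑ s', c d b s' ≤ ∑ b', ∑ s', c d b' s' :=
      Finset.single_le_sum
        (fun i (_ : i ∈ Finset.univ) => Finset.sum_nonneg fun j _ => hc d i j)
        (Finset.mem_univ b)
    have h3 : ∑ b', ∑ s', c d b' s' ≤ ∑ d', ∑ b', ∑ s', c d' b' s' :=
      Finset.single_le_sum
        (fun i (_ : i ∈ Finset.univ) => Finset.sum_nonneg fun j _ =>
          Finset.sum_nonneg fun k _ => hc i j k)
        (Finset.mem_univ d)
    simp only [hK]; linarith
  obtain ⟨π, ν, hπ0, hνinj, hνmat, hνunmat, hπstore⟩ :=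
    exists_assignment_equilibrium (fun (o : O) (d : Fin l) => K - c d o.1.1 o.1.2)
      (fun o d => by show (0:ℝ) ≤ K - c d o.1.1 o.1.2; have := hKc d o.1.1 o.1.2; linarith)
  -- cardinality of O
  have hcardm : Fintype.card O ≤ m := by
    have : Function.Injective (fun o : O => o.1.1) := by
      rintro ⟨⟨b, s⟩, h⟩ ⟨⟨b', s'⟩, h'⟩ hEq
      simp only at hEq
      subst hEq
      have : s = s' := by
        rw [h] at h'; exact Option.some.inj h'
      subst this; rfl
    simpa using Fintype.card_le_of_injective _ this
  have hcardn : Fintype.card O ≤ n := by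
    have : Function.Injective (fun o : O => o.1.2) := by
      rintro ⟨⟨b, s⟩, h⟩ ⟨⟨b', s'⟩, h'⟩ hEq
      simp only at hEq
      subst hEq
      have : b = b' := hμinj b b' s h h'
      subst this; rfl
    simpa using Fintype.card_le_of_injective _ this
  have hcardl : Fintype.card O ≤ l := le_trans (le_min hcardm hcardn) hl
  -- every executed order gets a courier
  have hfull : ∀ o : O, ∃ d, ν o = some d := by
    intro o₀
    cases hν0 : ν o₀ with
    | some d => exact ⟨d, rfl⟩
    | none =>
      exfalso
      have hall : ∀ d : Fin l, ∃ o : O, ν o = some d := by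
        intro d
        have h1 := hνunmat o₀ hν0 d
        have h2 := hKc d o₀.1.1 o₀.1.2
        have hπd : π d ≠ 0 := by intro h; rw [h] at h1; linarith
        by_contra hno
        push_neg at hno
        exact hπd (hπstore d hno)
      choose h hh using hall
      have hinj : Function.Injective h := by
        intro d d' hEq
        have h1 := hh d
        rw [hEq, hh d'] at h1
        exact (Option.some.inj h1).symm
      have hne : ∀ d, h d ≠ o₀ := by
        intro d hEq
        have h1 := hh d
        rw [hEq, hν0] at h1
        exact nomatch h1
      have h1 : (Finset.univ.image h).card = l := by
        rw [Finset.card_image_of_injective _ hinj, Finset.card_univ, Fintype.card_fin]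
      have h2 : Finset.univ.image h ⊆ Finset.univ.erase o₀ := by
        intro o ho
        obtain ⟨d, _, rfl⟩ := Finset.mem_image.1 ho
        exact Finset.mem_erase.2 ⟨hne d, Finset.mem_univ _⟩
      have h3 := Finset.card_le_card h2
      rw [h1, Finset.card_erase_of_mem (Finset.mem_univ o₀), Finset.card_univ] at h3
      have h4 : 1 ≤ Fintype.card O := Fintype.card_pos_iff.2 ⟨o₀⟩
      omega
  choose dd hdd using hfull
  have hddinj : ∀ o o' : O, dd o = dd o' → o = o' := by
    intro o o' h
    exact hνinj o o' (dd o) (hdd o) (h ▸ hdd o')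
  -- BR inequality for couriers
  have hBR : ∀ (o : O) (d : Fin l),
      c (dd o) o.1.1 o.1.2 + π (dd o) - c d o.1.1 o.1.2 ≤ π d := by
    intro o d
    have h := (hνmat o (dd o) (hdd o)).2 d
    linarith
  have hπdd : ∀ o : O, 0 ≤ π (dd o) := fun o => hπ0 (dd o)
  -- definitions of w and x
  set w : Fin m → Fin n → ℝ := fun b s =>
    if h : μ b = some s then c (dd ⟨(b, s), h⟩) b s + π (dd ⟨(b, s), h⟩) else 0 with hw
  set x : Fin m → Fin n → Fin l → Bool := fun b s d =>
    if h : μ b = some s then decide (dd ⟨(b, s), h⟩ = d) else false with hx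
  have hxiff : ∀ b s d, x b s d = true ↔ ∃ h : μ b = some s, dd ⟨(b, s), h⟩ = d := by
    intro b s d
    simp only [hx]
    split_ifs with h
    · simp [h]
    · simp [h]
  have hweq : ∀ (b : Fin m) (s : Fin n) (h : μ b = some s),
      w b s = c (dd ⟨(b, s), h⟩) b s + π (dd ⟨(b, s), h⟩) := by
    intro b s h
    simp only [hw, dif_pos h]
  have hox : ∀ o : O, x o.1.1 o.1.2 (dd o) = true := by
    intro o
    rw [hxiff]
    refine ⟨o.2, ?_⟩
    congr 1
  refine ⟨p, w, x, ?_, hp0, ?_, ?_, ?_, ?_, ?_, ?_, ?_⟩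
  · -- Feasible
    refine ⟨?_, ?_, ?_⟩
    · intro b s d s' d' h h'
      rw [hxiff] at h h'
      obtain ⟨h1, h2⟩ := h
      obtain ⟨h1', h2'⟩ := h'
      have hss : s = s' := Option.some.inj ((h1.symm.trans h1'))
      subst hss
      refine ⟨rfl, ?_⟩
      rw [← h2, ← h2']
    · intro b s d b' d' h h'
      rw [hxiff] at h h'
      obtain ⟨h1, h2⟩ := h
      obtain ⟨h1', h2'⟩ := h'
      have hbb : b = b' := hμinj b b' s h1 h1'
      subst hbb
      refine ⟨rfl, ?_⟩
      rw [← h2, ← h2']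
    · intro b s d b' s' h h'
      rw [hxiff] at h h'
      obtain ⟨h1, h2⟩ := h
      obtain ⟨h1', h2'⟩ := h'
      have : (⟨(b, s), h1⟩ : O) = ⟨(b', s'), h1'⟩ := hddinj _ _ (h2.trans h2'.symm)
      have := congrArg (fun o : O => o.1) this
      exact ⟨congrArg Prod.fst this, congrArg Prod.snd this⟩
  · -- 0 ≤ w
    intro b s
    simp only [hw]
    split_ifs with h
    · have := hc (dd ⟨(b, s), h⟩) b s
      have := hπ0 (dd ⟨(b, s), h⟩)
      linarith
    · exact le_refl 0
  · -- matched buyers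
    intro b s h
    obtain ⟨d, hd⟩ := h
    rw [hxiff] at hd
    exact hμmat b s hd.1
  · -- unmatched buyers
    intro b h s
    cases hμb : μ b with
    | none => exact hμunmat b hμb s
    | some s' =>
      exfalso
      exact absurd (hox ⟨(b, s'), hμb⟩) (by simpa using h s' (dd ⟨(b, s'), hμb⟩))
  · -- matched couriers
    intro d b s h
    rw [hxiff] at h
    obtain ⟨h1, h2⟩ := h
    set o : O := ⟨(b, s), h1⟩ with ho
    have hwbs : w b s = c (dd o) b s + π (dd o) := hweq b s h1
    constructor
    · rw [hwbs, ← h2]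
      have := hπdd o
      linarith
    · intro b' s'
      have hval : w b s - c d b s = π d := by
        rw [hwbs, ← h2]; ring
      rw [hval]
      by_cases h' : μ b' = some s'
      · set o' : O := ⟨(b', s'), h'⟩ with ho'
        have : w b' s' = c (dd o') b' s' + π (dd o') := hweq b' s' h'
        rw [this]
        have := hBR o' d
        simp only [ho'] at this
        linarith
      · have : w b' s' = 0 := by simp only [hw, dif_neg h']
        rw [this]
        have := hc d b' s'
        have := hπ0 d
        linarith
  · -- idle couriers
    intro d h b s
    have hπd : π d = 0 := by
      apply hπstore d
      intro o ho
      have hddo : dd o = d := Option.some.inj ((hdd o).symm.trans ho)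
      exact h o.1.1 o.1.2 (hddo ▸ hox o)
    by_cases h' : μ b = some s
    · set o' : O := ⟨(b, s), h'⟩ with ho'
      have hwbs : w b s = c (dd o') b s + π (dd o') := hweq b s h'
      rw [hwbs]
      have := hBR o' d
      simp only [ho'] at this
      rw [hπd] at this
      linarith
    · have : w b s = 0 := by simp only [hw, dif_neg h']
      rw [this]
      have := hc d b s
      linarith
  · -- unsold stores
    intro s h
    apply hpstore s
    intro b hb
    exact absurd (hox ⟨(b, s), hb⟩) (by simpa using h b (dd ⟨(b, s), hb⟩))
  · -- undelivered orders
    intro b s h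
    by_cases h' : μ b = some s
    · exact absurd (hox ⟨(b, s), h'⟩) (by simpa using h (dd ⟨(b, s), h'⟩))
    · simp only [hw, dif_neg h']


end DeliveryPlatform
end
end

section
/- In the market with two buyers b1, b2, two stores s1, s2, and one courier d1, where v_{b1}(s1)=4, v_{b1}(s2)=2, v_{b2}(s1)=1, v_{b2}(s2)=3 and all delivery costs are zero, there exists no without-tip equilibrium. In particular, a without-tip equilibrium can fail to exist in a market with l < min{m,n}. -/
open scoped Classical
noncomputable section

namespace DeliveryPlatform

variable {m n l : ℕ}

/-- In the market with two buyers, two stores and one courier,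
with valuations `v_{b1}(s1)=4, v_{b1}(s2)=2, v_{b2}(s1)=1, v_{b2}(s2)=3` and all
delivery costs zero, no without-tip equilibrium exists; in particular a
without-tip equilibrium can fail to exist when `l < min{m,n}`. -/
theorem no_without_tip_equilibrium_example :
    (1 < min 2 2) ∧
    ¬ ∃ (p : Fin 2 → ℝ) (w : Fin 2 → Fin 2 → ℝ) (x : Fin 2 → Fin 2 → Fin 1 → Bool),
      WithoutTipEq (fun b s => !![(4 : ℝ), 2; 1, 3] b s)
        (fun _ _ _ => (0 : ℝ)) p w x := by
  refine ⟨by norm_num, ?_⟩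
  rintro ⟨p, w, x, hF, hp, hw, hmb, hub, hc, hic, hsp, hwo⟩
  by_cases hx : ∃ b s d, x b s d = true
  · obtain ⟨b, s, d, hbsd⟩ := hx
    set b' : Fin 2 := if b = 0 then 1 else 0 with hb'
    set s' : Fin 2 := if s = 0 then 1 else 0 with hs'
    have hbne : b' ≠ b := by fin_cases b <;> simp [hb']
    have hsne : s' ≠ s := by fin_cases s <;> simp [hs']
    have hb'un : ∀ s'' d', ¬ x b' s'' d' := by
      intro s'' d' h'
      have hdd : d' = d := Subsingleton.elim _ _
      rw [hdd] at h'
      exact hbne (hF.2.2 b' s'' d b s h' hbsd).1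
    have hs'un : ∀ b'' d', ¬ x b'' s' d' := by
      intro b'' d' h'
      have hdd : d' = d := Subsingleton.elim _ _
      rw [hdd] at h'
      exact hsne (hF.2.2 b'' s' d b s h' hbsd).2
    have hp0 : p s' = 0 := hsp s' hs'un
    have h1 := hub b' hb'un s'
    rw [hp0] at h1
    fin_cases b <;> fin_cases s <;> simp [hb', hs'] at h1 <;> norm_num at h1
  · push_neg at hx
    have hp0 : p 0 = 0 := hsp 0 (fun b d h => by simp [hx] at h)
    have h1 := hub 0 (fun s d h => by simp [hx] at h) 0
    rw [hp0] at h1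
    norm_num at h1

end DeliveryPlatform
end
end

section
/- Let Ω ⊆ O be a set of orders in which each buyer and each store appears at most once, with |Ω| < l. Then: (i) in any courier plan (w,y) that serves Ω, the courier allocation y is a minimum-cost matching covering Ω in G_D; (ii) in any courier plan serving Ω, every courier d's utility is at most ū_d := C_Ω(G_D \ d) − C_Ω(G_D); and (iii) there exists a courier plan (w̄, y) serving Ω with w̄_{bs} = 0 for every order (b,s) ∉ Ω in which every courier d attains utility exactly ū_d. -/
open scoped Classical
noncomputable section

set_option maxRecDepth 8000

namespace DeliveryPlatform


lemma symm_fix {l : ℕ} (τ : Equiv.Perm (Fin l)) (E : Finset (Fin l))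
    (hfix : ∀ e ∉ E, τ e = e) : ∀ e ∉ E, τ.symm e = e := by
  intro e he
  conv_lhs => rw [← hfix e he]
  simp

lemma cost_trans_eq {l : ℕ} (cc : Fin l → Fin l → ℝ) (F : Fin l ≃ Fin l)
    (τ : Equiv.Perm (Fin l)) (E : Finset (Fin l)) (hfix : ∀ e ∉ E, τ e = e) :
    ∑ i, cc i ((F.trans τ) i) =
      ∑ i, cc i (F i) + ∑ e ∈ E, (cc (F.symm e) (τ e) - cc (F.symm e) e) := by
  have h2 : ∑ i : Fin l, (cc i (τ (F i)) - cc i (F i))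
      = ∑ e : Fin l, (cc (F.symm e) (τ e) - cc (F.symm e) e) := by
    refine Fintype.sum_equiv F (fun i => cc i (τ (F i)) - cc i (F i)) _ (fun i => ?_)
    simp
  have h3 : ∑ e : Fin l, (cc (F.symm e) (τ e) - cc (F.symm e) e)
      = ∑ e ∈ E, (cc (F.symm e) (τ e) - cc (F.symm e) e) := by
    refine (Finset.sum_subset (Finset.subset_univ E) ?_).symm
    intro e _ he
    rw [hfix e he]; ring
  have h1 : ∑ i, cc i ((F.trans τ) i) - ∑ i, cc i (F i)
      = ∑ i : Fin l, (cc i (τ (F i)) - cc i (F i)) := by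
    rw [Finset.sum_sub_distrib]; rfl
  linarith [h1, h2, h3]

lemma perm_maps_to {l : ℕ} (τ : Equiv.Perm (Fin l)) (E : Finset (Fin l))
    (hfix : ∀ e ∉ E, τ e = e) : ∀ e ∈ E, τ e ∈ E := by
  intro e he
  by_contra h
  have h1 : τ (τ e) = τ e := hfix _ h
  have h2 : τ e = e := τ.injective h1
  apply h; rw [h2]; exact he

lemma sum_perm_invariant {l : ℕ} (τ : Equiv.Perm (Fin l)) (E : Finset (Fin l))
    (hfix : ∀ e ∉ E, τ e = e) (g : Fin l → ℝ) :
    ∑ e ∈ E, g (τ e) = ∑ e ∈ E, g e := by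
  refine Finset.sum_nbij' (fun e => τ e) (fun e => τ.symm e) ?_ ?_ ?_ ?_ ?_
  · exact fun a ha => perm_maps_to τ E hfix a ha
  · exact fun a ha => perm_maps_to τ.symm E (symm_fix τ E hfix) a ha
  · intro a _; simp
  · intro a _; simp
  · intro a _; rfl

/-- The key exchange lemma: from a minimum-cost bijection `σ` and a bijection `N`
"avoiding" courier `d` (i.e. `d` is assigned to a dummy slot), construct a bijection
`K` avoiding `d' = σ i'` with the VCG-type cost bound. -/
lemma exchange {l q : ℕ} (cc : Fin l → Fin l → ℝ)
    (hcc : ∀ i : Fin l, q ≤ (i : ℕ) → ∀ e, cc i e = 0)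
    (σ N : Fin l ≃ Fin l)
    (hσ : ∀ G : Fin l ≃ Fin l, ∑ i, cc i (σ i) ≤ ∑ i, cc i (G i))
    (d d' : Fin l) (hd : q ≤ ((N.symm d) : ℕ)) (i' : Fin l) (hi' : σ i' = d') :
    ∃ K : Fin l ≃ Fin l, q ≤ ((K.symm d') : ℕ) ∧
      ∑ i, cc i (K i) ≤ ∑ i, cc i (N i) + cc i' d - cc i' d' := by
  have hi's : σ.symm d' = i' := by rw [← hi']; simp
  by_cases hdd : d = d'
  · refine ⟨N, by rw [← hdd]; exact hd, by rw [hdd]; exact le_of_eq (by ring)⟩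
  -- set-up: the permutation ρ with ρ (N i) = σ i
  obtain ⟨ρ, hρ⟩ : ∃ ρ : Equiv.Perm (Fin l), ρ = N.symm.trans σ := ⟨_, rfl⟩
  have hρN : ∀ e : Fin l, σ.symm (ρ e) = N.symm e := by
    intro e; rw [hρ]; simp
  obtain ⟨P, hP⟩ : ∃ P : ℕ → Fin l, P = fun t => (ρ ^ t) d' := ⟨_, rfl⟩
  have hPiter : ∀ t : ℕ, P t = (⇑ρ)^[t] d' := by
    intro t; simp only [hP, Equiv.Perm.coe_pow]
  have hper : d' ∈ Function.periodicPts ⇑ρ := by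
    refine ⟨orderOf ρ, orderOf_pos ρ, ?_⟩
    have : ρ ^ orderOf ρ = 1 := pow_orderOf_eq_one ρ
    show (⇑ρ)^[orderOf ρ] d' = d'
    rw [← Equiv.Perm.coe_pow, this]; rfl
  obtain ⟨r, hr⟩ : ∃ r : ℕ, r = Function.minimalPeriod ⇑ρ d' := ⟨_, rfl⟩
  have hr0 : 0 < r := by rw [hr]; exact Function.minimalPeriod_pos_of_mem_periodicPts hper
  have hPmod : ∀ t : ℕ, P (t % r) = P t := by
    intro t
    rw [hPiter, hPiter, hr]
    exact Function.iterate_mod_minimalPeriod_eq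
  have hPr : P r = d' := by
    have := hPmod r
    simpa [Nat.mod_self, hPiter 0] using this.symm
  have hP0 : P 0 = d' := by simp only [hP]; simp
  have hPinj : ∀ a b, a < r → b < r → P a = P b → a = b := by
    intro a b ha hb hab
    have := Function.iterate_injOn_Iio_minimalPeriod (f := ⇑ρ) (x := d')
    rw [← hr] at this
    have hab' : (⇑ρ)^[a] d' = (⇑ρ)^[b] d' := by
      rw [← hPiter, ← hPiter]; exact hab
    exact this ha hb hab'
  have hPsucc : ∀ t : ℕ, P (t + 1) = ρ (P t) := by
    intro t; simp only [hP]; simp [pow_succ']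
  -- facts about lists of orbit elements
  have hLnodup : ∀ s : ℕ, s ≤ r → ((List.range s).map P).Nodup := by
    intro s hs
    refine List.Nodup.map_on ?_ List.nodup_range
    intro a ha b hb hab
    rw [List.mem_range] at ha hb
    exact hPinj a b (lt_of_lt_of_le ha hs) (lt_of_lt_of_le hb hs) hab
  have hmemL : ∀ (s : ℕ) (x : Fin l), x ∈ (List.range s).map P ↔ ∃ t, t < s ∧ P t = x := by
    intro s x; simp [List.mem_map, List.mem_range]
  have hform : ∀ s : ℕ, s ≤ r → ∀ i, i < s →
      ((List.range s).map P).formPerm (P i) = P ((i + 1) % s) := by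
    intro s hs i hi
    have hlen : ((List.range s).map P).length = s := by simp
    have hgi : ((List.range s).map P)[i]'(by rw [hlen]; exact hi) = P i := by simp
    have := List.formPerm_apply_getElem ((List.range s).map P) (hLnodup s hs) i
      (by rw [hlen]; exact hi)
    rw [hgi] at this
    rw [this]
    simp

  -- case split: is d on the ρ-orbit of d'?
  by_cases hcase : ∃ t, t < r ∧ P t = d
  · -- CASE 1 : d = P j for some 0 < j < r
    obtain ⟨j, hjr, hjd⟩ := hcase
    have hj0 : j ≠ 0 := by
      intro h; apply hdd; rw [← hjd, h, hP0]
    obtain ⟨τ, hτdef⟩ : ∃ τ : Equiv.Perm (Fin l),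
        τ = ((List.range (j+1)).map P).formPerm := ⟨_, rfl⟩
    obtain ⟨E, hEdef⟩ : ∃ E : Finset (Fin l),
        E = ((List.range (j+1)).map P).toFinset := ⟨_, rfl⟩
    have hmemE : ∀ x : Fin l, x ∈ E ↔ ∃ t, t < j + 1 ∧ P t = x := by
      intro x; rw [hEdef, List.mem_toFinset, hmemL]
    have hfixτ : ∀ e ∉ E, τ e = e := by
      intro e he
      rw [hτdef]
      exact List.formPerm_apply_of_notMem
        (by rw [hEdef, List.mem_toFinset] at he; exact he)
    have hτ1 : ∀ i, i < j → τ (P i) = P (i + 1) := by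
      intro i hi
      have h := hform (j+1) (by omega) i (by omega)
      rw [Nat.mod_eq_of_lt (by omega)] at h
      rw [hτdef]; exact h
    have hτ2 : τ d = d' := by
      have h := hform (j+1) (by omega) j (by omega)
      rw [Nat.mod_self, hP0] at h
      rw [← hjd, hτdef]; exact h
    have hτsymd' : τ.symm d' = d := by rw [← hτ2]; simp
    have hKsymm : (N.trans τ).symm d' = N.symm d := by
      rw [Equiv.symm_trans_apply, hτsymd']
    have hS1 := cost_trans_eq cc N τ E hfixτ
    have hS2 := cost_trans_eq cc σ τ.symm E (symm_fix τ E hfixτ)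
    have hsum2 : ∑ e ∈ E, (cc (σ.symm e) (τ.symm e) - cc (σ.symm e) e)
        = ∑ e ∈ E, (cc (σ.symm (τ e)) e - cc (σ.symm (τ e)) (τ e)) := by
      rw [← sum_perm_invariant τ E hfixτ
        (fun e => cc (σ.symm e) (τ.symm e) - cc (σ.symm e) e)]
      exact Finset.sum_congr rfl (fun e _ => by simp)
    have hd_mem : d ∈ E := (hmemE d).2 ⟨j, by omega, hjd⟩
    have hkey : ∑ e ∈ E, ((cc (N.symm e) (τ e) - cc (N.symm e) e)
        + (cc (σ.symm (τ e)) e - cc (σ.symm (τ e)) (τ e))) = cc i' d - cc i' d' := by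
      have h0 : ∀ e ∈ E, e ≠ d → ((cc (N.symm e) (τ e) - cc (N.symm e) e)
          + (cc (σ.symm (τ e)) e - cc (σ.symm (τ e)) (τ e))) = 0 := by
        intro e he hne
        obtain ⟨i, hi, rfl⟩ := (hmemE e).1 he
        have hij : i < j := by
          rcases Nat.lt_succ_iff_lt_or_eq.mp hi with h | h
          · exact h
          · exact absurd (by rw [h]; exact hjd) hne
        have h1 : τ (P i) = ρ (P i) := by rw [hτ1 i hij, hPsucc]
        rw [h1, hρN]; ring
      rw [Finset.sum_eq_single_of_mem d hd_mem h0, hτ2, hi's,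
        hcc _ hd d', hcc _ hd d]
      ring
    have hopt := hσ (σ.trans τ.symm)
    rw [hS2] at hopt
    have hsplit : ∑ e ∈ E, ((cc (N.symm e) (τ e) - cc (N.symm e) e)
        + (cc (σ.symm (τ e)) e - cc (σ.symm (τ e)) (τ e)))
        = ∑ e ∈ E, (cc (N.symm e) (τ e) - cc (N.symm e) e)
          + ∑ e ∈ E, (cc (σ.symm (τ e)) e - cc (σ.symm (τ e)) (τ e)) :=
      Finset.sum_add_distrib
    refine ⟨N.trans τ, by rw [hKsymm]; exact hd, ?_⟩
    rw [hS1]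
    linarith [hkey, hsplit, hsum2, hopt]
  · -- CASE 2 : d is not on the orbit of d'
    push_neg at hcase
    obtain ⟨τ, hτdef⟩ : ∃ τ : Equiv.Perm (Fin l),
        τ = ((List.range r).map P).formPerm := ⟨_, rfl⟩
    obtain ⟨E, hEdef⟩ : ∃ E : Finset (Fin l),
        E = ((List.range r).map P).toFinset := ⟨_, rfl⟩
    have hmemE : ∀ x : Fin l, x ∈ E ↔ ∃ t, t < r ∧ P t = x := by
      intro x; rw [hEdef, List.mem_toFinset, hmemL]
    have hfixτ : ∀ e ∉ E, τ e = e := by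
      intro e he
      rw [hτdef]
      exact List.formPerm_apply_of_notMem
        (by rw [hEdef, List.mem_toFinset] at he; exact he)
    have hτall : ∀ i, i < r → τ (P i) = P (i + 1) := by
      intro i hi
      have h := hform r le_rfl i hi
      rw [hPmod (i+1)] at h
      rw [hτdef]; exact h
    have hdE : d ∉ E := by
      intro h
      obtain ⟨t, ht, hPt⟩ := (hmemE d).1 h
      exact hcase t ht hPt
    have hτd : τ d = d := hfixτ d hdE
    have hτsymd : τ.symm d = d := by rw [Equiv.symm_apply_eq]; exact hτd.symm
    have hτρ : ∀ e ∈ E, τ e = ρ e := by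
      intro e he
      obtain ⟨i, hi, rfl⟩ := (hmemE e).1 he
      rw [hτall i hi, hPsucc]
    have hS1 := cost_trans_eq cc N τ E hfixτ
    have hS2 := cost_trans_eq cc σ τ.symm E (symm_fix τ E hfixτ)
    have hsum2 : ∑ e ∈ E, (cc (σ.symm e) (τ.symm e) - cc (σ.symm e) e)
        = ∑ e ∈ E, (cc (N.symm e) e - cc (N.symm e) (τ e)) := by
      rw [← sum_perm_invariant τ E hfixτ
        (fun e => cc (σ.symm e) (τ.symm e) - cc (σ.symm e) e)]
      refine Finset.sum_congr rfl (fun e he => ?_)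
      have h1 : σ.symm (τ e) = N.symm e := by rw [hτρ e he, hρN]
      simp [h1]
    have hzero : ∑ e ∈ E, (cc (N.symm e) e - cc (N.symm e) (τ e))
        + ∑ e ∈ E, (cc (N.symm e) (τ e) - cc (N.symm e) e) = 0 := by
      rw [← Finset.sum_add_distrib]
      exact Finset.sum_eq_zero (fun e _ => by ring)
    have hopt := hσ (σ.trans τ.symm)
    rw [hS2] at hopt
    have hSb1 : ∑ e ∈ E, (cc (N.symm e) (τ e) - cc (N.symm e) e) ≤ 0 := by linarith
    have hr1 : r - 1 < r := by omega
    have hτlast : τ (P (r-1)) = d' := by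
      rw [hτall (r-1) hr1, Nat.sub_add_cancel hr0, hPr]
    have hNP : N.symm (P (r-1)) = i' := by
      have h2 : ρ (P (r-1)) = d' := by
        rw [← hPsucc, Nat.sub_add_cancel hr0, hPr]
      rw [← hρN (P (r-1)), h2, hi's]
    have hK1symd' : (N.trans τ).symm d' = i' := by
      rw [Equiv.symm_trans_apply]
      have h3 : τ.symm d' = P (r-1) := by rw [← hτlast]; simp
      rw [h3, hNP]
    have hK1symd : (N.trans τ).symm d = N.symm d := by
      rw [Equiv.symm_trans_apply, hτsymd]
    obtain ⟨S, hSdef⟩ : ∃ S : Finset (Fin l), S = insert d' {d} := ⟨_, rfl⟩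
    have hfixsw : ∀ e ∉ S, Equiv.swap d' d e = e := by
      intro e he
      rw [hSdef] at he
      simp only [Finset.mem_insert, Finset.mem_singleton] at he
      push_neg at he
      exact Equiv.swap_apply_of_ne_of_ne he.1 he.2
    have hS3 := cost_trans_eq cc (N.trans τ) (Equiv.swap d' d) S hfixsw
    have hsumS : ∑ e ∈ S, (cc ((N.trans τ).symm e) (Equiv.swap d' d e)
        - cc ((N.trans τ).symm e) e) = cc i' d - cc i' d' := by
      rw [hSdef, Finset.sum_insert (by
        simp only [Finset.mem_singleton]
        exact fun h => hdd h.symm), Finset.sum_singleton,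
        Equiv.swap_apply_left, Equiv.swap_apply_right, hK1symd', hK1symd,
        hcc _ hd d', hcc _ hd d]
      ring
    refine ⟨(N.trans τ).trans (Equiv.swap d' d), ?_, ?_⟩
    · rw [Equiv.symm_trans_apply]
      have h4 : (Equiv.swap d' d).symm d' = d := by simp
      rw [h4, hK1symd]
      exact hd
    · rw [hS3, hsumS, hS1]
      linarith



lemma exists_equiv_extend {l q : ℕ} (hq : q ≤ l) (g : Fin q → Fin l)
    (hg : Function.Injective g) :
    ∃ G : Fin l ≃ Fin l, ∀ t : Fin q, G (Fin.castLE hq t) = g t := by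
  have hbij : Function.Bijective
      (fun i : {i : Fin l // (i : ℕ) < q} =>
        (⟨g ⟨i.1, i.2⟩, Set.mem_range_self _⟩ : {e : Fin l // e ∈ Set.range g})) := by
    constructor
    · rintro ⟨i, hi⟩ ⟨j, hj⟩ h
      simp only [Subtype.mk.injEq] at h
      have := hg h
      simpa [Fin.ext_iff] using congrArg Fin.val this
    · rintro ⟨e, ⟨t, rfl⟩⟩
      exact ⟨⟨Fin.castLE hq t, t.2⟩, by simp⟩
  set e := Equiv.ofBijective _ hbij with he
  refine ⟨e.extendSubtype, fun t => ?_⟩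
  have hmem : ((Fin.castLE hq t : Fin l) : ℕ) < q := t.2
  rw [Equiv.extendSubtype_apply_of_mem e _ hmem]
  simp [he, Equiv.ofBijective]

lemma ite_bool_iff (p : Prop) [Decidable p] : (if p then true else false) = true ↔ p := by
  by_cases h : p <;> simp [h]

lemma sum_ite_unique {α : Type*} [Fintype α] [DecidableEq α] (f : α → ℝ) (P : α → Prop)
    [DecidablePred P] (e₀ : α) (h : ∀ e, P e ↔ e = e₀) :
    ∑ e, (if P e then f e else 0) = f e₀ := by
  have h1 : ∀ e ∈ Finset.univ, (if P e then f e else 0) = (if e = e₀ then f e else 0) :=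
    fun e _ => if_congr (h e) rfl rfl
  rw [Finset.sum_congr rfl h1]
  simp


variable {m n l : ℕ}

/-- A courier allocation: a matching in the bipartite graph `G_D` between orders
and couriers, in which additionally no buyer and no store appears in more than
one matched order. -/
def CourierAlloc (y : Fin m × Fin n → Fin l → Bool) : Prop :=
  (∀ d o o', y o d → y o' d → o = o') ∧
  (∀ o d d', y o d → y o d' → d = d') ∧
  (∀ o d o' d', y o d → y o' d' → o.1 = o'.1 → o = o') ∧
  (∀ o d o' d', y o d → y o' d' → o.2 = o'.2 → o = o')

/-- Total delivery cost of a courier allocation. -/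
def totalCost (c : Fin l → Fin m → Fin n → ℝ)
    (y : Fin m × Fin n → Fin l → Bool) : ℝ :=
  ∑ o, ∑ d, if y o d then c d o.1 o.2 else 0

/-- The courier allocation `y` covers the set of orders `Ω`. -/
def Covers (Ω : Finset (Fin m × Fin n)) (y : Fin m × Fin n → Fin l → Bool) : Prop :=
  ∀ o ∈ Ω, ∃ d, y o d

/-- The courier allocation `y` serves `Ω`: exactly the orders of `Ω` are delivered. -/
def Serves (Ω : Finset (Fin m × Fin n)) (y : Fin m × Fin n → Fin l → Bool) : Prop :=
  ∀ o, (∃ d, y o d) ↔ o ∈ Ω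

/-- `C_Ω(G_D)`: the minimum total cost of a courier allocation covering `Ω`. -/
def minCost (c : Fin l → Fin m → Fin n → ℝ) (Ω : Finset (Fin m × Fin n)) : ℝ :=
  sInf {r : ℝ | ∃ y, CourierAlloc y ∧ Covers Ω y ∧ totalCost c y = r}

/-- `C_Ω(G_D \ d₀)`: the minimum total cost of a courier allocation covering `Ω`
in which courier `d₀` is unused. -/
def minCostWithout (c : Fin l → Fin m → Fin n → ℝ) (Ω : Finset (Fin m × Fin n))
    (d0 : Fin l) : ℝ :=
  sInf {r : ℝ | ∃ y, CourierAlloc y ∧ Covers Ω y ∧ (∀ o, ¬ y o d0) ∧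
    totalCost c y = r}

/-- A courier plan `(w, y)`: every matched courier delivers a utility-maximizing
order with nonnegative utility, and every unmatched courier has no order of
positive utility. -/
def CourierPlan (c : Fin l → Fin m → Fin n → ℝ) (w : Fin m × Fin n → ℝ)
    (y : Fin m × Fin n → Fin l → Bool) : Prop :=
  CourierAlloc y ∧ (∀ o, 0 ≤ w o) ∧
  (∀ d o, y o d →
    0 ≤ w o - c d o.1 o.2 ∧ ∀ o', w o' - c d o'.1 o'.2 ≤ w o - c d o.1 o.2) ∧
  (∀ d, (∀ o, ¬ y o d) → ∀ o, w o - c d o.1 o.2 ≤ 0)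

/-- Utility of courier `d` in the courier plan `(w, y)` (zero if unmatched). -/
def planUtil (c : Fin l → Fin m → Fin n → ℝ) (w : Fin m × Fin n → ℝ)
    (y : Fin m × Fin n → Fin l → Bool) (d : Fin l) : ℝ :=
  ∑ o, if y o d then w o - c d o.1 o.2 else 0

/-- In `Ω`, every buyer and every store appears at most once. -/
def PairwiseDistinct (Ω : Finset (Fin m × Fin n)) : Prop :=
  (∀ o ∈ Ω, ∀ o' ∈ Ω, Prod.fst o = Prod.fst o' → o = o') ∧
  (∀ o ∈ Ω, ∀ o' ∈ Ω, Prod.snd o = Prod.snd o' → o = o')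

/-- `Ω_x`: the set of orders delivered under the allocation `x`. -/
def OrdersOf (x : Fin m → Fin n → Fin l → Bool) : Finset (Fin m × Fin n) :=
  Finset.univ.filter fun o => ∃ d, x o.1 o.2 d

/-- Lemma 3.2: For `Ω` with distinct buyers and stores and `|Ω| < l`:
(i) any courier plan serving `Ω` is a minimum-cost matching covering `Ω`;
(ii) in any such plan every courier's utility is at most
`ū_d = C_Ω(G_D \ d) − C_Ω(G_D)`; and
(iii) there is a courier plan serving `Ω`, with zero compensation outside `Ω`,
in which every courier attains utility exactly `ū_d`. -/
theorem courier_plan_lemma_lt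
    (c : Fin l → Fin m → Fin n → ℝ) (hc : ∀ d b s, 0 ≤ c d b s)
    (Ω : Finset (Fin m × Fin n)) (hΩ : PairwiseDistinct Ω)
    (hcard : Ω.card < l) :
    (∀ (w : Fin m × Fin n → ℝ) (y : Fin m × Fin n → Fin l → Bool),
      CourierPlan c w y → Serves Ω y →
        Covers Ω y ∧ totalCost c y = minCost c Ω ∧
        ∀ d, planUtil c w y d ≤ minCostWithout c Ω d - minCost c Ω) ∧
    (∃ (w : Fin m × Fin n → ℝ) (y : Fin m × Fin n → Fin l → Bool),
      CourierPlan c w y ∧ Serves Ω y ∧ (∀ o ∉ Ω, w o = 0) ∧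
      ∀ d, planUtil c w y d = minCostWithout c Ω d - minCost c Ω) := by
  classical
  -- ===== slot set-up =====
  set q := Ω.card with hqdef
  have hql : q < l := hcard
  obtain ⟨eqv, -⟩ : ∃ e : Fin q ≃ {x // x ∈ Ω}, True := by
    have h1 : Fintype.card {x // x ∈ Ω} = q := by simp [hqdef]
    exact ⟨(Fintype.equivFinOfCardEq h1).symm, trivial⟩
  set ordOf : Fin q → Fin m × Fin n := fun t => (eqv t : Fin m × Fin n) with hordOf
  have ordmem : ∀ t, ordOf t ∈ Ω := fun t => (eqv t).2
  have ordinj : Function.Injective ordOf := by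
    intro a b h
    have : eqv a = eqv b := Subtype.ext h
    exact eqv.injective this
  have hΩimg : Finset.univ.image ordOf = Ω := by
    apply Finset.eq_of_subset_of_card_le
    · intro o ho
      obtain ⟨t, -, rfl⟩ := Finset.mem_image.1 ho
      exact ordmem t
    · rw [Finset.card_image_of_injective _ ordinj]
      simp [hqdef]
  set tOf : ∀ o : Fin m × Fin n, o ∈ Ω → Fin q := fun o h => eqv.symm ⟨o, h⟩ with htOfdef
  have hto : ∀ (o : Fin m × Fin n) (h : o ∈ Ω), ordOf (tOf o h) = o := by
    intro o h; simp [hordOf, htOfdef]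
  have htOf : ∀ t : Fin q, tOf (ordOf t) (ordmem t) = t := by
    intro t
    have : (⟨ordOf t, ordmem t⟩ : {x // x ∈ Ω}) = eqv t := Subtype.ext rfl
    simp [htOfdef, this]
  set ι : Fin q → Fin l := Fin.castLE hql.le with hι
  have ιinj : Function.Injective ι := fun a b h => by
    simpa [Fin.ext_iff, hι] using congrArg Fin.val h
  set cc : Fin l → Fin l → ℝ := fun i e =>
    if h : (i : ℕ) < q then c e (ordOf ⟨i, h⟩).1 (ordOf ⟨i, h⟩).2 else 0 with hccdef
  have hccdum : ∀ i : Fin l, q ≤ (i : ℕ) → ∀ e, cc i e = 0 := by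
    intro i hi e
    simp only [hccdef]
    rw [dif_neg (by omega)]
  have hccreal : ∀ (t : Fin q) (e : Fin l), cc (ι t) e = c e (ordOf t).1 (ordOf t).2 := by
    intro t e
    have h1 : ((ι t : Fin l) : ℕ) < q := t.2
    simp only [hccdef]
    rw [dif_pos h1]
    congr 1 <;> congr 1 <;> exact congrArg ordOf (by apply Fin.ext; rfl)
  -- cost of a bijection as a sum over real slots
  have hcostB : ∀ F : Fin l ≃ Fin l,
      ∑ i, cc i (F i) = ∑ t : Fin q, c (F (ι t)) (ordOf t).1 (ordOf t).2 := by
    intro F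
    have himg : ∑ i ∈ Finset.univ.image ι, cc i (F i)
        = ∑ t : Fin q, cc (ι t) (F (ι t)) :=
      Finset.sum_image (fun a _ b _ h => ιinj h)
    have hres : ∑ i : Fin l, cc i (F i) = ∑ i ∈ Finset.univ.image ι, cc i (F i) := by
      refine (Finset.sum_subset (Finset.subset_univ _) ?_).symm
      intro i _ hni
      have : q ≤ (i : ℕ) := by
        by_contra hlt
        push_neg at hlt
        exact hni (Finset.mem_image.2 ⟨⟨i, hlt⟩, Finset.mem_univ _, by apply Fin.ext; rfl⟩)
      exact hccdum i this _
    rw [hres, himg]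
    exact Finset.sum_congr rfl (fun t _ => hccreal t _)
  -- ===== minimizers =====
  obtain ⟨Fmin, -, hFmin'⟩ := Finset.exists_min_image (Finset.univ : Finset (Fin l ≃ Fin l))
    (fun F => ∑ i, cc i (F i)) ⟨Equiv.refl _, Finset.mem_univ _⟩
  have hminle : ∀ F : Fin l ≃ Fin l, ∑ i, cc i (Fmin i) ≤ ∑ i, cc i (F i) :=
    fun F => hFmin' F (Finset.mem_univ F)
  have hNex : ∀ d : Fin l, ∃ Nd : Fin l ≃ Fin l, q ≤ ((Nd.symm d) : ℕ) ∧
      ∀ G : Fin l ≃ Fin l, q ≤ ((G.symm d) : ℕ) → ∑ i, cc i (Nd i) ≤ ∑ i, cc i (G i) := by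
    intro d
    have hwit : (Equiv.swap (⟨q, hql⟩ : Fin l) d).symm d = ⟨q, hql⟩ := by
      rw [Equiv.symm_swap, Equiv.swap_apply_right]
    obtain ⟨Nd, hmem, hmin⟩ := Finset.exists_min_image
      (Finset.univ.filter (fun F : Fin l ≃ Fin l => q ≤ ((F.symm d) : ℕ)))
      (fun F => ∑ i, cc i (F i))
      ⟨Equiv.swap ⟨q, hql⟩ d, by simp [Finset.mem_filter, hwit]⟩
    rw [Finset.mem_filter] at hmem
    exact ⟨Nd, hmem.2, fun G hG => hmin G (Finset.mem_filter.2 ⟨Finset.mem_univ _, hG⟩)⟩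
  choose Nmin hNavoid hNmin using hNex
  -- ===== conversion: bijection → allocation =====
  set yOf : (Fin l ≃ Fin l) → (Fin m × Fin n → Fin l → Bool) := fun F o e =>
    if (∃ t : Fin q, ordOf t = o ∧ F (ι t) = e) then true else false with hyOfdef
  have hyOf : ∀ (F : Fin l ≃ Fin l) o e,
      yOf F o e = true ↔ ∃ t, ordOf t = o ∧ F (ι t) = e := by
    intro F o e
    simp only [hyOfdef]
    exact ite_bool_iff _
  have allocOf : ∀ F, CourierAlloc (yOf F) := by
    intro F
    refine ⟨?_, ?_, ?_, ?_⟩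
    · intro e o o' h1 h2
      obtain ⟨t, rfl, ht2⟩ := (hyOf F o e).1 h1
      obtain ⟨t', rfl, ht2'⟩ := (hyOf F _ e).1 h2
      have : ι t = ι t' := F.injective (ht2.trans ht2'.symm)
      rw [ιinj this]
    · intro o e e' h1 h2
      obtain ⟨t, rfl, ht2⟩ := (hyOf F o e).1 h1
      obtain ⟨t', heq, ht2'⟩ := (hyOf F _ e').1 h2
      rw [← ht2, ← ht2', ordinj heq.symm]
    · intro o e o' e' h1 h2 hfst
      obtain ⟨t, rfl, -⟩ := (hyOf F o e).1 h1
      obtain ⟨t', rfl, -⟩ := (hyOf F _ e').1 h2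
      exact hΩ.1 _ (ordmem t) _ (ordmem t') hfst
    · intro o e o' e' h1 h2 hsnd
      obtain ⟨t, rfl, -⟩ := (hyOf F o e).1 h1
      obtain ⟨t', rfl, -⟩ := (hyOf F _ e').1 h2
      exact hΩ.2 _ (ordmem t) _ (ordmem t') hsnd
  have servesOf : ∀ F, Serves Ω (yOf F) := by
    intro F o
    constructor
    · rintro ⟨e, he⟩
      obtain ⟨t, rfl, -⟩ := (hyOf F o e).1 he
      exact ordmem t
    · intro ho
      exact ⟨F (ι (tOf o ho)), (hyOf F o _).2 ⟨tOf o ho, hto o ho, rfl⟩⟩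
  have avoidOf : ∀ (F : Fin l ≃ Fin l) (d : Fin l), q ≤ ((F.symm d) : ℕ) →
      ∀ o, ¬ (yOf F o d = true) := by
    intro F d hFd o hy
    obtain ⟨t, -, ht2⟩ := (hyOf F o d).1 hy
    have : ι t = F.symm d := by rw [← ht2]; simp
    have h2 : ((ι t : Fin l) : ℕ) < q := t.2
    rw [this] at h2
    omega
  have costOf : ∀ F, totalCost c (yOf F) = ∑ i, cc i (F i) := by
    intro F
    rw [hcostB F]
    unfold totalCost
    have hinner0 : ∀ o, o ∉ Ω →
        (∑ e, if yOf F o e then c e o.1 o.2 else 0) = 0 := by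
      intro o ho
      refine Finset.sum_eq_zero (fun e _ => ?_)
      rw [if_neg]
      intro hy
      obtain ⟨t, rfl, -⟩ := (hyOf F o e).1 hy
      exact ho (ordmem t)
    have h1 : ∑ o : Fin m × Fin n, (∑ e, if yOf F o e then c e o.1 o.2 else 0)
        = ∑ o ∈ Finset.univ.image ordOf, (∑ e, if yOf F o e then c e o.1 o.2 else 0) := by
      refine (Finset.sum_subset (Finset.subset_univ _) ?_).symm
      intro o _ hno
      exact hinner0 o (by rwa [hΩimg] at hno)
    rw [h1, Finset.sum_image (fun a _ b _ h => ordinj h)]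
    refine Finset.sum_congr rfl (fun t _ => ?_)
    refine sum_ite_unique _ _ (F (ι t)) (fun e => ?_)
    constructor
    · intro hy
      obtain ⟨t', heq, ht2⟩ := (hyOf F _ e).1 hy
      rw [← ht2, ordinj heq]
    · rintro rfl
      exact (hyOf F _ _).2 ⟨t, rfl, rfl⟩

  -- ===== conversion: allocation → bijection =====
  have conv2 : ∀ y : Fin m × Fin n → Fin l → Bool, CourierAlloc y → Covers Ω y →
      ∃ G : Fin l ≃ Fin l, (∑ i, cc i (G i)) ≤ totalCost c y ∧
        (∀ d : Fin l, (∀ o, ¬ (y o d = true)) → q ≤ ((G.symm d) : ℕ)) := by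
    intro y halloc hcov
    set g : Fin q → Fin l := fun t => Classical.choose (hcov (ordOf t) (ordmem t)) with hgdef
    have hg : ∀ t, y (ordOf t) (g t) = true :=
      fun t => Classical.choose_spec (hcov (ordOf t) (ordmem t))
    have ginj : Function.Injective g := by
      intro a b h
      have := halloc.1 (g a) (ordOf a) (ordOf b) (hg a) (by rw [h]; exact hg b)
      exact ordinj this
    obtain ⟨G, hG⟩ := exists_equiv_extend hql.le g ginj
    have hGι : ∀ t, G (ι t) = g t := fun t => hG t
    refine ⟨G, ?_, ?_⟩
    · rw [hcostB G]
      unfold totalCost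
      have step1 : ∑ t : Fin q, c (G (ι t)) (ordOf t).1 (ordOf t).2
          ≤ ∑ t : Fin q, (∑ e, if y (ordOf t) e then c e (ordOf t).1 (ordOf t).2 else 0) := by
        refine Finset.sum_le_sum (fun t _ => ?_)
        rw [hGι t]
        have hsingle : (if y (ordOf t) (g t) then c (g t) (ordOf t).1 (ordOf t).2 else 0)
            ≤ ∑ e, if y (ordOf t) e then c e (ordOf t).1 (ordOf t).2 else 0 :=
          Finset.single_le_sum
            (f := fun e => if y (ordOf t) e then c e (ordOf t).1 (ordOf t).2 else 0)
            (fun e _ => by split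
                           · exact hc _ _ _
                           · exact le_rfl) (Finset.mem_univ (g t))
        rwa [if_pos (hg t)] at hsingle
      refine le_trans step1 ?_
      have himg2 : ∑ o ∈ Finset.univ.image ordOf, (∑ e, if y o e then c e o.1 o.2 else 0)
          = ∑ t : Fin q, (∑ e, if y (ordOf t) e then c e (ordOf t).1 (ordOf t).2 else 0) :=
        Finset.sum_image (fun a _ b _ h => ordinj h)
      rw [← himg2]
      refine Finset.sum_le_sum_of_subset_of_nonneg (Finset.subset_univ _) ?_
      intro o _ _
      refine Finset.sum_nonneg (fun e _ => ?_)
      split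
      · exact hc _ _ _
      · exact le_rfl
    · intro d hd
      by_contra hlt
      push_neg at hlt
      set i : Fin l := G.symm d with hidef
      have h2 : (i : ℕ) < q := hlt
      have h3 : ι ⟨(i : ℕ), h2⟩ = i := by apply Fin.ext; rfl
      have h4 : G (ι ⟨(i : ℕ), h2⟩) = d := by rw [h3, hidef]; simp
      rw [hGι] at h4
      exact hd (ordOf ⟨(i : ℕ), h2⟩) (by rw [← h4]; exact hg _)
  -- ===== identification of minCost and minCostWithout =====
  have hnonneg_tc : ∀ y : Fin m × Fin n → Fin l → Bool, 0 ≤ totalCost c y := by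
    intro y
    unfold totalCost
    refine Finset.sum_nonneg (fun o _ => Finset.sum_nonneg (fun e _ => ?_))
    split
    · exact hc _ _ _
    · exact le_rfl
  have hMC : minCost c Ω = ∑ i, cc i (Fmin i) := by
    apply le_antisymm
    · refine csInf_le ⟨0, ?_⟩
        ⟨yOf Fmin, allocOf Fmin, fun o ho => (servesOf Fmin o).2 ho, costOf Fmin⟩
      rintro r ⟨y, -, -, rfl⟩
      exact hnonneg_tc y
    · refine le_csInf ⟨totalCost c (yOf Fmin),
        ⟨yOf Fmin, allocOf Fmin, fun o ho => (servesOf Fmin o).2 ho, rfl⟩⟩ ?_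
      rintro r ⟨y, hy1, hy2, rfl⟩
      obtain ⟨G, hG1, -⟩ := conv2 y hy1 hy2
      exact le_trans (hminle G) hG1
  have hMCW : ∀ d : Fin l, minCostWithout c Ω d = ∑ i, cc i (Nmin d i) := by
    intro d
    apply le_antisymm
    · refine csInf_le ⟨0, ?_⟩
        ⟨yOf (Nmin d), allocOf _, fun o ho => (servesOf _ o).2 ho,
          fun o => avoidOf _ d (hNavoid d) o, costOf _⟩
      rintro r ⟨y, -, -, -, rfl⟩
      exact hnonneg_tc y
    · refine le_csInf ⟨totalCost c (yOf (Nmin d)),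
        ⟨yOf (Nmin d), allocOf _, fun o ho => (servesOf _ o).2 ho,
          fun o => avoidOf _ d (hNavoid d) o, rfl⟩⟩ ?_
      rintro r ⟨y, hy1, hy2, hy3, rfl⟩
      obtain ⟨G, hG1, hG2⟩ := conv2 y hy1 hy2
      exact le_trans (hNmin d G (hG2 d (hy3))) hG1
  -- ===== planUtil basic facts =====
  have hpu1 : ∀ (w : Fin m × Fin n → ℝ) (y : Fin m × Fin n → Fin l → Bool),
      CourierAlloc y → ∀ dd o, y o dd = true →
      planUtil c w y dd = w o - c dd o.1 o.2 := by
    intro w y halloc dd o hy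
    unfold planUtil
    refine sum_ite_unique _ _ o (fun o' => ?_)
    constructor
    · intro hy'
      exact halloc.1 dd o' o hy' hy
    · rintro rfl; exact hy
  have hpu2 : ∀ (w : Fin m × Fin n → ℝ) (y : Fin m × Fin n → Fin l → Bool) (dd : Fin l),
      (∀ o, ¬ (y o dd = true)) → planUtil c w y dd = 0 := by
    intro w y dd h
    unfold planUtil
    exact Finset.sum_eq_zero (fun o _ => if_neg (h o))

  -- ===== part (i) and (ii): any courier plan serving Ω =====
  have partA : ∀ (w : Fin m × Fin n → ℝ) (y : Fin m × Fin n → Fin l → Bool),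
      CourierPlan c w y → Serves Ω y →
        Covers Ω y ∧ totalCost c y = minCost c Ω ∧
        ∀ d, planUtil c w y d ≤ minCostWithout c Ω d - minCost c Ω := by
    intro w y hplan hserve
    obtain ⟨halloc, hw0, hbr, hunm⟩ := hplan
    have hcov : Covers Ω y := fun o ho => (hserve o).2 ho
    set dOf : Fin q → Fin l := fun t =>
      Classical.choose ((hserve (ordOf t)).2 (ordmem t)) with hdOfdef
    have hdOf : ∀ t, y (ordOf t) (dOf t) = true :=
      fun t => Classical.choose_spec ((hserve (ordOf t)).2 (ordmem t))
    have huniq : ∀ t (e : Fin l), y (ordOf t) e = true ↔ e = dOf t := by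
      intro t e
      constructor
      · intro hy
        exact halloc.2.1 (ordOf t) e (dOf t) hy (hdOf t)
      · rintro rfl; exact hdOf t
    have htc : totalCost c y = ∑ t : Fin q, c (dOf t) (ordOf t).1 (ordOf t).2 := by
      unfold totalCost
      have h1 : ∑ o : Fin m × Fin n, (∑ e, if y o e then c e o.1 o.2 else 0)
          = ∑ o ∈ Finset.univ.image ordOf, (∑ e, if y o e then c e o.1 o.2 else 0) := by
        refine (Finset.sum_subset (Finset.subset_univ _) ?_).symm
        intro o _ hno
        rw [hΩimg] at hno
        refine Finset.sum_eq_zero (fun e _ => if_neg (fun hy => hno ((hserve o).1 ⟨e, hy⟩)))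
      rw [h1, Finset.sum_image (fun a _ b _ h => ordinj h)]
      exact Finset.sum_congr rfl (fun t _ => sum_ite_unique _ _ (dOf t) (huniq t))
    have hpusum : ∑ dd : Fin l, planUtil c w y dd
        = ∑ t : Fin q, (w (ordOf t) - c (dOf t) (ordOf t).1 (ordOf t).2) := by
      unfold planUtil
      rw [Finset.sum_comm]
      have h1 : ∑ o : Fin m × Fin n, (∑ dd, if y o dd then w o - c dd o.1 o.2 else 0)
          = ∑ o ∈ Finset.univ.image ordOf,
              (∑ dd, if y o dd then w o - c dd o.1 o.2 else 0) := by
        refine (Finset.sum_subset (Finset.subset_univ _) ?_).symm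
        intro o _ hno
        rw [hΩimg] at hno
        refine Finset.sum_eq_zero (fun e _ => if_neg (fun hy => hno ((hserve o).1 ⟨e, hy⟩)))
      rw [h1, Finset.sum_image (fun a _ b _ h => ordinj h)]
      exact Finset.sum_congr rfl (fun t _ => sum_ite_unique _ _ (dOf t) (huniq t))
    have hpu3 : ∀ dd, 0 ≤ planUtil c w y dd := by
      intro dd
      by_cases h : ∃ o, y o dd = true
      · obtain ⟨o, ho⟩ := h
        rw [hpu1 w y halloc dd o ho]
        exact (hbr dd o ho).1
      · push_neg at h
        rw [hpu2 w y dd h]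
    have hpu4 : ∀ (dd : Fin l) (o' : Fin m × Fin n),
        w o' - c dd o'.1 o'.2 ≤ planUtil c w y dd := by
      intro dd o'
      by_cases h : ∃ o, y o dd = true
      · obtain ⟨o, ho⟩ := h
        rw [hpu1 w y halloc dd o ho]
        exact (hbr dd o ho).2 o'
      · push_neg at h
        rw [hpu2 w y dd h]
        exact hunm dd h o'
    have hcomp : ∀ (F : Fin l ≃ Fin l) (D : Finset (Fin l)), (∀ t : Fin q, F (ι t) ∈ D) →
        ∑ t : Fin q, (w (ordOf t) - c (F (ι t)) (ordOf t).1 (ordOf t).2)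
          ≤ ∑ dd ∈ D, planUtil c w y dd := by
      intro F D hD
      have s1 : ∑ t : Fin q, (w (ordOf t) - c (F (ι t)) (ordOf t).1 (ordOf t).2)
          ≤ ∑ t : Fin q, planUtil c w y (F (ι t)) :=
        Finset.sum_le_sum (fun t _ => hpu4 (F (ι t)) (ordOf t))
      have hinj2 : ∀ a ∈ Finset.univ, ∀ b ∈ Finset.univ,
          (fun t : Fin q => F (ι t)) a = (fun t : Fin q => F (ι t)) b → a = b :=
        fun a _ b _ h => ιinj (F.injective h)
      have s2 : ∑ t : Fin q, planUtil c w y (F (ι t))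
          = ∑ e ∈ Finset.univ.image (fun t => F (ι t)), planUtil c w y e :=
        (Finset.sum_image hinj2).symm
      have s3 : ∑ e ∈ Finset.univ.image (fun t => F (ι t)), planUtil c w y e
          ≤ ∑ dd ∈ D, planUtil c w y dd := by
        refine Finset.sum_le_sum_of_subset_of_nonneg ?_ (fun e _ _ => hpu3 e)
        intro e he
        obtain ⟨t, -, rfl⟩ := Finset.mem_image.1 he
        exact hD t
      linarith
    have hple : totalCost c y ≤ ∑ i, cc i (Fmin i) := by
      have h1 := hcomp Fmin Finset.univ (fun t => Finset.mem_univ _)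
      rw [hpusum] at h1
      rw [Finset.sum_sub_distrib, Finset.sum_sub_distrib] at h1
      rw [htc, hcostB Fmin]
      linarith
    have heq : totalCost c y = minCost c Ω := by
      rw [hMC]
      refine le_antisymm hple ?_
      rw [← hMC]
      refine csInf_le ⟨0, ?_⟩ ⟨y, halloc, hcov, rfl⟩
      rintro r ⟨y', -, -, rfl⟩
      exact hnonneg_tc y'
    refine ⟨hcov, heq, ?_⟩
    intro d0
    have hmemD : ∀ t : Fin q, Nmin d0 (ι t) ∈ Finset.univ.erase d0 := by
      intro t
      refine Finset.mem_erase.2 ⟨?_, Finset.mem_univ _⟩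
      intro hcontra
      have h5 := congrArg (Nmin d0).symm hcontra
      rw [Equiv.symm_apply_apply] at h5
      have h6 : ((ι t : Fin l) : ℕ) < q := t.2
      rw [h5] at h6
      have := hNavoid d0
      omega
    have h1 := hcomp (Nmin d0) (Finset.univ.erase d0) hmemD
    have h2 : ∑ dd ∈ Finset.univ.erase d0, planUtil c w y dd + planUtil c w y d0
        = ∑ dd : Fin l, planUtil c w y dd :=
      Finset.sum_erase_add _ _ (Finset.mem_univ d0)
    rw [hMCW d0, hMC, hcostB (Nmin d0)]
    have heq2 : ∑ i, cc i (Fmin i) = ∑ t : Fin q, c (dOf t) (ordOf t).1 (ordOf t).2 := by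
      rw [← hMC, ← heq, htc]
    rw [hpusum] at h2
    rw [Finset.sum_sub_distrib] at h1 h2
    rw [heq2]
    linarith

  -- ===== part (iii): the courier-optimal plan =====
  obtain ⟨ubar, hubar⟩ : ∃ u : Fin l → ℝ,
      u = fun e => (∑ i, cc i (Nmin e i)) - ∑ i, cc i (Fmin i) := ⟨_, rfl⟩
  have hubareq : ∀ e, ubar e = (∑ i, cc i (Nmin e i)) - ∑ i, cc i (Fmin i) := by
    intro e; rw [hubar]
  have hubar0 : ∀ e, 0 ≤ ubar e := by
    intro e
    rw [hubareq e]
    linarith [hminle (Nmin e)]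
  have hstar : ∀ (e : Fin l) (t : Fin q),
      ubar (Fmin (ι t)) + c (Fmin (ι t)) (ordOf t).1 (ordOf t).2
        ≤ ubar e + c e (ordOf t).1 (ordOf t).2 := by
    intro e t
    obtain ⟨K, hK1, hK2⟩ :=
      exchange cc hccdum Fmin (Nmin e) hminle e (Fmin (ι t)) (hNavoid e) (ι t) rfl
    have h3 := hNmin (Fmin (ι t)) K hK1
    rw [hccreal, hccreal] at hK2
    rw [hubareq, hubareq]
    linarith
  obtain ⟨wbar, hwbar⟩ : ∃ wb : Fin m × Fin n → ℝ, wb = fun o =>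
      if h : o ∈ Ω then
        ubar (Fmin (ι (tOf o h))) + c (Fmin (ι (tOf o h))) o.1 o.2
      else 0 := ⟨_, rfl⟩
  have hwbar_mem : ∀ (o : Fin m × Fin n) (h : o ∈ Ω),
      wbar o = ubar (Fmin (ι (tOf o h))) + c (Fmin (ι (tOf o h))) o.1 o.2 := by
    intro o h; rw [hwbar]; simp only; rw [dif_pos h]
  have hwbar_nmem : ∀ o, o ∉ Ω → wbar o = 0 := by
    intro o h; rw [hwbar]; simp only; rw [dif_neg h]
  have hwbar_t : ∀ t : Fin q,
      wbar (ordOf t) = ubar (Fmin (ι t)) + c (Fmin (ι t)) (ordOf t).1 (ordOf t).2 := by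
    intro t
    rw [hwbar_mem (ordOf t) (ordmem t), htOf]
  have hkeyb : ∀ (e : Fin l) (o' : Fin m × Fin n),
      wbar o' - c e o'.1 o'.2 ≤ ubar e := by
    intro e o'
    by_cases h : o' ∈ Ω
    · rw [hwbar_mem o' h]
      have hh := hstar e (tOf o' h)
      rw [hto o' h] at hh
      linarith
    · rw [hwbar_nmem o' h]
      have := hc e o'.1 o'.2
      linarith [hubar0 e]
  have hplan3 : ∀ (e : Fin l) (o : Fin m × Fin n), yOf Fmin o e = true →
      0 ≤ wbar o - c e o.1 o.2 ∧
        ∀ o', wbar o' - c e o'.1 o'.2 ≤ wbar o - c e o.1 o.2 := by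
    intro e o hy
    obtain ⟨t, rfl, hFe⟩ := (hyOf Fmin o e).1 hy
    have hval : wbar (ordOf t) - c e (ordOf t).1 (ordOf t).2 = ubar e := by
      rw [hwbar_t t, hFe]; ring
    constructor
    · rw [hval]; exact hubar0 e
    · intro o'; rw [hval]; exact hkeyb e o'
  have hunmA : ∀ e : Fin l, (∀ o, ¬ (yOf Fmin o e = true)) → ubar e = 0 := by
    intro e he
    have havoid : q ≤ ((Fmin.symm e) : ℕ) := by
      by_contra hlt
      push_neg at hlt
      have h2 : ((Fmin.symm e : Fin l) : ℕ) < q := hlt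
      have h3 : ι ⟨((Fmin.symm e : Fin l) : ℕ), h2⟩ = Fmin.symm e := by apply Fin.ext; rfl
      have h4 : Fmin (ι ⟨((Fmin.symm e : Fin l) : ℕ), h2⟩) = e := by rw [h3]; simp
      exact he (ordOf ⟨((Fmin.symm e : Fin l) : ℕ), h2⟩)
        ((hyOf Fmin _ _).2 ⟨⟨((Fmin.symm e : Fin l) : ℕ), h2⟩, rfl, h4⟩)
    have h1 := hNmin e Fmin havoid
    have h0 := hubar0 e
    rw [hubareq e] at h0 ⊢
    linarith
  have hplanOK : CourierPlan c wbar (yOf Fmin) := by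
    refine ⟨allocOf Fmin, ?_, ?_, ?_⟩
    · intro o
      by_cases h : o ∈ Ω
      · rw [hwbar_mem o h]
        have := hc (Fmin (ι (tOf o h))) o.1 o.2
        linarith [hubar0 (Fmin (ι (tOf o h)))]
      · rw [hwbar_nmem o h]
    · intro e o hy; exact hplan3 e o hy
    · intro e he o
      have h1 := hkeyb e o
      rw [hunmA e he] at h1
      exact h1
  have hpuval : ∀ e, planUtil c wbar (yOf Fmin) e
      = minCostWithout c Ω e - minCost c Ω := by
    intro e
    rw [hMCW e, hMC, ← hubareq e]
    by_cases h : ∃ o, yOf Fmin o e = true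
    · obtain ⟨o, ho⟩ := h
      rw [hpu1 wbar (yOf Fmin) (allocOf Fmin) e o ho]
      obtain ⟨t, rfl, hFe⟩ := (hyOf Fmin o e).1 ho
      rw [hwbar_t t, hFe]; ring
    · push_neg at h
      rw [hpu2 wbar (yOf Fmin) e h, hunmA e h]
  exact ⟨partA, ⟨wbar, yOf Fmin, hplanOK, servesOf Fmin,
    fun o ho => hwbar_nmem o ho, hpuval⟩⟩


end DeliveryPlatform
end
end

section
/- Let Ω ⊆ O be a set of orders in which each buyer and each store appears at most once, with |Ω| = l. Then in any courier plan (w,y) that serves Ω, the courier allocation y is a minimum-cost matching covering Ω in G_D; and there exists a courier plan (w̄, y) serving Ω with w̄_{bs} = 0 for every order (b,s) ∉ Ω in which every courier d attains a utility ū_d that is at least max_{b,s} v_b(s). -/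
open scoped Classical
noncomputable section

namespace DeliveryPlatform

variable {m n l : ℕ}

section WalkPotential

variable {V : Type*}

/-- Weight of a walk along a list of vertices. -/
def cw (W : V → V → ℝ) : List V → ℝ
  | [] => 0
  | [_] => 0
  | a :: b :: t => W a b + cw W (b :: t)

@[simp] lemma cw_nil (W : V → V → ℝ) : cw W [] = 0 := rfl
@[simp] lemma cw_single (W : V → V → ℝ) (a : V) : cw W [a] = 0 := rfl
lemma cw_cons_cons (W : V → V → ℝ) (a b : V) (t : List V) :
    cw W (a :: b :: t) = W a b + cw W (b :: t) := rfl

lemma cw_append_last (W : V → V → ℝ) (p : List V) (u v : V)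
    (hu : p.getLast? = some u) : cw W (p ++ [v]) = cw W p + W u v := by
  induction p with
  | nil => simp at hu
  | cons a t ih =>
    cases t with
    | nil =>
      simp only [List.getLast?_singleton, Option.some.injEq] at hu
      subst hu
      simp [cw_cons_cons]
    | cons b t2 =>
      rw [List.getLast?_cons_cons] at hu
      have := ih hu
      simp only [List.cons_append, cw_cons_cons] at *
      rw [this]; ring

lemma cw_split (W : V → V → ℝ) (p1 p2 : List V) (a : V) :
    cw W (p1 ++ a :: p2) = cw W (p1 ++ [a]) + cw W (a :: p2) := by
  induction p1 with
  | nil => simp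
  | cons x p1 ih =>
    cases p1 with
    | nil => simp [cw_cons_cons]
    | cons y p1' =>
      simp only [List.cons_append, cw_cons_cons] at *
      rw [ih]; ring

lemma cw_eq_sum (W : V → V → ℝ) (r : List V) :
    cw W r = ∑ i : Fin (r.length - 1),
      W (r[(i:ℕ)]'(by omega)) (r[(i:ℕ)+1]'(by omega)) := by
  induction r with
  | nil => simp
  | cons a t ih =>
    cases t with
    | nil => simp
    | cons b t2 =>
      rw [cw_cons_cons, ih]
      show _ = ∑ i : Fin (t2.length + 1),
        W ((a :: b :: t2)[(i:ℕ)]'(by simp only [List.length_cons]; omega))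
          ((a :: b :: t2)[(i:ℕ)+1]'(by simp only [List.length_cons]; omega))
      rw [Fin.sum_univ_succ]
      congr 1

variable [Fintype V] [DecidableEq V]

lemma cw_cycle_nonneg (W : V → V → ℝ) (hdiag : ∀ x, W x x = 0)
    (hperm : ∀ ρ : Equiv.Perm V, 0 ≤ ∑ j, W j (ρ j))
    (a : V) (t : List V) (h : (a :: t).Nodup) :
    0 ≤ cw W ((a :: t) ++ [a]) := by
  set q : List V := a :: t with hq
  have hLpos : 0 < q.length := by simp [hq]
  have key : ∑ j, W j (q.formPerm j) = cw W (q ++ [a]) := by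
    have h1 : ∑ j, W j (q.formPerm j) = ∑ j ∈ q.toFinset, W j (q.formPerm j) := by
      refine (Finset.sum_subset (Finset.subset_univ _) ?_).symm
      intro x _ hx
      rw [List.formPerm_apply_of_notMem (by simpa using hx), hdiag]
    have h2 : ∑ j ∈ q.toFinset, W j (q.formPerm j) =
        ∑ i : Fin q.length, W (q[(i:ℕ)]) (q.formPerm (q[(i:ℕ)])) := by
      rw [List.sum_toFinset _ h, ← List.ofFn_getElem_eq_map, List.sum_ofFn]
    have h3 : ∀ i : Fin q.length,
        W (q[(i:ℕ)]) (q.formPerm (q[(i:ℕ)])) =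
        W (q[(i:ℕ)]) (q[((i:ℕ)+1) % q.length]'(Nat.mod_lt _ hLpos)) := by
      intro i
      rw [List.formPerm_apply_getElem _ h]
    have h4 : cw W (q ++ [a]) = ∑ i : Fin q.length,
        W (q[(i:ℕ)]) (q[((i:ℕ)+1) % q.length]'(Nat.mod_lt _ hLpos)) := by
      rw [cw_eq_sum]
      have hlen : (q ++ [a]).length - 1 = q.length := by simp
      refine Fintype.sum_equiv (finCongr hlen) _ _ fun i => ?_
      have hi : (i:ℕ) < q.length := by
        have := i.isLt
        simp only [List.length_append, List.length_cons, List.length_nil,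
          Nat.add_sub_cancel] at this
        exact this
      simp only [finCongr_apply, Fin.coe_cast]
      rcases lt_or_eq_of_le (Nat.succ_le_of_lt hi) with hik | hik
      · rw [List.getElem_append_left (by omega), List.getElem_append_left hik]
        congr 1
        exact getElem_congr_idx (Nat.mod_eq_of_lt hik).symm
      · rw [List.getElem_append_left (by omega),
          List.getElem_append_right (by omega : q.length ≤ (i:ℕ)+1)]
        congr 1
        have e1 : (i:ℕ) + 1 - q.length = 0 := by omega
        have e2 : ((i:ℕ) + 1) % q.length = 0 := by
          rw [show (i:ℕ) + 1 = q.length from hik, Nat.mod_self]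
        rw [getElem_congr_idx e1, getElem_congr_idx e2]
        simp [hq]
    rw [h1, h2, h4]
    exact Finset.sum_congr rfl fun i _ => h3 i
  rw [← key]
  exact hperm _

lemma exists_potential (W : V → V → ℝ) (hdiag : ∀ x, W x x = 0)
    (hperm : ∀ ρ : Equiv.Perm V, 0 ≤ ∑ j, W j (ρ j)) :
    ∃ π : V → ℝ, ∀ u v, π v ≤ π u + W u v := by
  set T : V → Set (List V) := fun x => {p | p.Nodup ∧ p.getLast? = some x} with hT
  have hTfin : ∀ x, (T x).Finite := by
    intro x
    refine Set.Finite.subset (List.finite_length_le (α := V) (Fintype.card V)) ?_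
    intro p hp
    exact hp.1.length_le_card
  set S : V → Set ℝ := fun x => cw W '' T x with hS
  have hSfin : ∀ x, (S x).Finite := fun x => (hTfin x).image _
  have hSne : ∀ x, (S x).Nonempty := fun x => ⟨cw W [x], [x], ⟨by simp, by simp⟩, rfl⟩
  set π : V → ℝ := fun x => sInf (S x) with hπ
  have hmem : ∀ x, π x ∈ S x := fun x => (hSne x).csInf_mem (hSfin x)
  have hle : ∀ x r, r ∈ S x → π x ≤ r := fun x r hr =>
    csInf_le (hSfin x).bddBelow hr
  refine ⟨π, fun u v => ?_⟩
  obtain ⟨p, ⟨hnd, hlast⟩, hcw⟩ := hmem u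
  by_cases hv : v ∈ p
  · obtain ⟨p1, p2, rfl⟩ := List.append_of_mem hv
    have hsub1 : (p1 ++ [v]).Sublist (p1 ++ v :: p2) :=
      (List.cons_sublist_cons.mpr (List.nil_sublist p2)).append_left p1
    have hq1 : (p1 ++ [v]).Nodup := hsub1.nodup hnd
    have hq2 : (v :: p2).Nodup := (List.sublist_append_right p1 (v :: p2)).nodup hnd
    have hlastq : (p1 ++ [v]).getLast? = some v := List.getLast?_concat
    have hπv : π v ≤ cw W (p1 ++ [v]) := hle v _ ⟨_, ⟨hq1, hlastq⟩, rfl⟩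
    have hsplit : cw W (p1 ++ v :: p2) = cw W (p1 ++ [v]) + cw W (v :: p2) :=
      cw_split W p1 p2 v
    have hu : (v :: p2).getLast? = some u := by
      rwa [List.getLast?_append_of_ne_nil _ (by simp)] at hlast
    have hcyc : 0 ≤ cw W ((v :: p2) ++ [v]) := cw_cycle_nonneg W hdiag hperm v p2 hq2
    have hdecomp : cw W ((v :: p2) ++ [v]) = cw W (v :: p2) + W u v :=
      cw_append_last W _ u v hu
    linarith
  · have hnd2 : (p ++ [v]).Nodup := by
      rw [List.nodup_append]
      exact ⟨hnd, List.nodup_singleton v, by simpa using fun x hx (hxv : x = v) => hv (hxv ▸ hx)⟩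
    have hlast2 : (p ++ [v]).getLast? = some v := by
      rw [List.getLast?_concat]
    have h1 : cw W (p ++ [v]) = cw W p + W u v := cw_append_last W p u v hlast
    have h2 := hle v _ ⟨p ++ [v], ⟨hnd2, hlast2⟩, rfl⟩
    rw [hcw] at *
    linarith

end WalkPotential

/-- Lemma 3.3: For `Ω` with distinct buyers and stores and `|Ω| = l`:
any courier plan serving `Ω` is a minimum-cost matching covering `Ω`, and there
exists a courier plan serving `Ω`, with zero compensation outside `Ω`, in which
every courier's utility is at least `max_{b,s} v_b(s)`. -/
theorem courier_plan_lemma_eq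
    (v : Fin m → Fin n → ℝ) (hv : ∀ b s, 0 ≤ v b s)
    (c : Fin l → Fin m → Fin n → ℝ) (hc : ∀ d b s, 0 ≤ c d b s)
    (Ω : Finset (Fin m × Fin n)) (hΩ : PairwiseDistinct Ω)
    (hcard : Ω.card = l) :
    (∀ (w : Fin m × Fin n → ℝ) (y : Fin m × Fin n → Fin l → Bool),
      CourierPlan c w y → Serves Ω y →
        Covers Ω y ∧ totalCost c y = minCost c Ω) ∧
    (∃ (w : Fin m × Fin n → ℝ) (y : Fin m × Fin n → Fin l → Bool),
      CourierPlan c w y ∧ Serves Ω y ∧ (∀ o ∉ Ω, w o = 0) ∧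
      ∀ d b s, v b s ≤ planUtil c w y d) := by
  classical
  have hcardV : Fintype.card {o : Fin m × Fin n // o ∈ Ω} = l := by
    rw [Fintype.card_coe]; exact hcard
  -- generic facts about allocations whose matched orders include Ω
  have key_le : ∀ (y0 : (Fin m × Fin n) → Fin l → Bool)
      (f : {o : Fin m × Fin n // o ∈ Ω} → Fin l),
      (∀ o, y0 o.1 (f o) = true) →
      ∑ o : {o : Fin m × Fin n // o ∈ Ω}, c (f o) o.1.1 o.1.2 ≤ totalCost c y0 := by
    intro y0 f hf
    have step1 : ∑ o ∈ Ω, (∑ d, if y0 o d then c d o.1 o.2 else 0) ≤ totalCost c y0 := by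
      refine Finset.sum_le_sum_of_subset_of_nonneg (Finset.subset_univ Ω) ?_
      intro o _ _
      refine Finset.sum_nonneg fun d _ => ?_
      split <;> [exact hc d o.1 o.2; exact le_refl 0]
    refine le_trans ?_ step1
    rw [← Finset.sum_attach Ω (fun o => ∑ d, if y0 o d then c d o.1 o.2 else 0),
      Finset.univ_eq_attach]
    refine Finset.sum_le_sum fun o _ => ?_
    have := Finset.single_le_sum
      (f := fun d => if y0 o.1 d then c d o.1.1 o.1.2 else 0)
      (fun d _ => by split <;> [exact hc d o.1.1 o.1.2; exact le_refl 0])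
      (Finset.mem_univ (f o))
    rwa [if_pos (hf o)] at this
  have key_eq : ∀ (y0 : (Fin m × Fin n) → Fin l → Bool)
      (f : {o : Fin m × Fin n // o ∈ Ω} → Fin l),
      CourierAlloc y0 → Serves Ω y0 → (∀ o, y0 o.1 (f o) = true) →
      totalCost c y0 = ∑ o : {o : Fin m × Fin n // o ∈ Ω}, c (f o) o.1.1 o.1.2 := by
    intro y0 f halloc0 hserves0 hf
    have step1 : totalCost c y0 = ∑ o ∈ Ω, (∑ d, if y0 o d then c d o.1 o.2 else 0) := by
      refine (Finset.sum_subset (Finset.subset_univ Ω) ?_).symm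
      intro o _ ho
      refine Finset.sum_eq_zero fun d _ => ?_
      rw [if_neg]
      intro hy
      exact ho ((hserves0 o).mp ⟨d, hy⟩)
    rw [step1, ← Finset.sum_attach Ω (fun o => ∑ d, if y0 o d then c d o.1 o.2 else 0),
      Finset.univ_eq_attach]
    refine Finset.sum_congr rfl fun o _ => ?_
    refine Finset.sum_eq_single_of_mem (f o) (Finset.mem_univ _) ?_ |>.trans
      (if_pos (hf o))
    intro d _ hd
    rw [if_neg]
    intro hy
    exact hd (halloc0.2.1 o.1 d (f o) hy (hf o))
  constructor
  · rintro w y ⟨halloc, hw0, hbr, hun⟩ hserves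
    have hcov : Covers Ω y := fun o ho => (hserves o).mpr ho
    refine ⟨hcov, ?_⟩
    set φ : {o : Fin m × Fin n // o ∈ Ω} → Fin l :=
      fun o => Classical.choose ((hserves o.1).mpr o.2) with hφdef
    have hφ : ∀ o, y o.1 (φ o) = true :=
      fun o => Classical.choose_spec ((hserves o.1).mpr o.2)
    have hφinj : Function.Injective φ := by
      intro o o' he
      exact Subtype.ext (halloc.1 (φ o) o.1 o'.1 (hφ o) (he ▸ hφ o'))
    have hφbij : Function.Bijective φ :=
      (Fintype.bijective_iff_injective_and_card φ).mpr
        ⟨hφinj, by rw [hcardV, Fintype.card_fin]⟩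
    set Φ := Equiv.ofBijective φ hφbij with hΦdef
    have htc : totalCost c y = ∑ o : {o : Fin m × Fin n // o ∈ Ω}, c (φ o) o.1.1 o.1.2 :=
      key_eq y φ halloc hserves hφ
    symm
    refine IsLeast.csInf_eq ⟨⟨y, halloc, hcov, rfl⟩, ?_⟩
    rintro r ⟨y', halloc', hcov', rfl⟩
    set ψ : {o : Fin m × Fin n // o ∈ Ω} → Fin l :=
      fun o => Classical.choose (hcov' o.1 o.2) with hψdef
    have hψ : ∀ o, y' o.1 (ψ o) = true := fun o => Classical.choose_spec (hcov' o.1 o.2)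
    have heinj : Function.Injective (fun o => Φ.symm (ψ o)) := by
      intro o o' he
      have : ψ o = ψ o' := Φ.symm.injective.eq_iff.mp he
      exact Subtype.ext (halloc'.1 (ψ o) o.1 o'.1 (hψ o) (this ▸ hψ o'))
    have hebij : Function.Bijective (fun o => Φ.symm (ψ o)) :=
      Finite.injective_iff_bijective.mp heinj
    set E := Equiv.ofBijective _ hebij with hEdef
    have hφE : ∀ o, φ (E o) = ψ o := by
      intro o
      show φ (Φ.symm (ψ o)) = ψ o
      exact Φ.apply_symm_apply (ψ o)
    have hyE : ∀ o, y (E o).1 (ψ o) = true := fun o => (hφE o) ▸ hφ (E o)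
    have hsum : ∑ o : {o : Fin m × Fin n // o ∈ Ω},
        (w (E o).1 - c (ψ o) (E o).1.1 (E o).1.2) ≥
        ∑ o : {o : Fin m × Fin n // o ∈ Ω}, (w o.1 - c (ψ o) o.1.1 o.1.2) := by
      refine Finset.sum_le_sum fun o _ => ?_
      exact (hbr (ψ o) (E o).1 (hyE o)).2 o.1
    have hw1 : ∑ o : {o : Fin m × Fin n // o ∈ Ω}, w (E o).1 =
        ∑ o : {o : Fin m × Fin n // o ∈ Ω}, w o.1 :=
      Equiv.sum_comp E (fun o => w o.1)
    have hc1 : ∑ o : {o : Fin m × Fin n // o ∈ Ω}, c (ψ o) (E o).1.1 (E o).1.2 =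
        ∑ o : {o : Fin m × Fin n // o ∈ Ω}, c (φ o) o.1.1 o.1.2 := by
      rw [← Equiv.sum_comp E (fun o => c (φ o) o.1.1 o.1.2)]
      exact Finset.sum_congr rfl fun o _ => by rw [hφE o]
    have hc2 : ∑ o : {o : Fin m × Fin n // o ∈ Ω}, c (ψ o) o.1.1 o.1.2 ≤ totalCost c y' :=
      key_le y' ψ hψ
    rw [Finset.sum_sub_distrib, Finset.sum_sub_distrib] at hsum
    rw [htc]
    linarith
  · rcases Nat.eq_zero_or_pos l with hl | hl
    · subst hl
      have hΩe : Ω = ∅ := Finset.card_eq_zero.mp hcard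
      refine ⟨fun _ => 0, fun _ _ => false, ?_, ?_, fun o _ => rfl, fun d => d.elim0⟩
      · refine ⟨⟨?_, ?_, ?_, ?_⟩, fun o => le_refl 0, ?_, fun d => d.elim0⟩
        · intro d o o' h; simp at h
        · intro o d d' h; simp at h
        · intro o d o' d' h; simp at h
        · intro o d o' d' h; simp at h
        · intro d; exact d.elim0
      · intro o
        simp [hΩe]
    · have hne : Ω.Nonempty := Finset.card_pos.mp (by rw [hcard]; exact hl)
      obtain ⟨o₀, ho₀⟩ := hne
      haveI hm : Nonempty (Fin m) := ⟨o₀.1⟩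
      haveI hn : Nonempty (Fin n) := ⟨o₀.2⟩
      set V := {o : Fin m × Fin n // o ∈ Ω} with hVdef
      set A : Fin l → V → ℝ := fun d o => c d o.1.1 o.1.2 with hAdef
      have hVne : Nonempty (Fin l ≃ V) := ⟨(Fintype.equivFinOfCardEq hcardV).symm⟩
      obtain ⟨σ, -, hσmin⟩ := Finset.exists_min_image Finset.univ
        (fun e : Fin l ≃ V => ∑ d, A d (e d)) ⟨hVne.some, Finset.mem_univ _⟩
      set W : V → V → ℝ := fun j i => A (σ.symm j) i - A (σ.symm j) j with hWdef
      have hdiag : ∀ x, W x x = 0 := fun x => sub_self _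
      have hperm : ∀ ρ : Equiv.Perm V, 0 ≤ ∑ j, W j (ρ j) := by
        intro ρ
        have h1 : ∑ j, A (σ.symm j) (ρ j) = ∑ d, A d (ρ (σ d)) := by
          rw [← Equiv.sum_comp σ (fun j => A (σ.symm j) (ρ j))]
          simp
        have h2 : ∑ j, A (σ.symm j) j = ∑ d, A d (σ d) := by
          rw [← Equiv.sum_comp σ (fun j => A (σ.symm j) j)]
          simp
        have h3 : ∑ d, A d (σ d) ≤ ∑ d, A d ((σ.trans ρ) d) :=
          hσmin (σ.trans ρ) (Finset.mem_univ _)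
        have h4 : ∑ d, A d ((σ.trans ρ) d) = ∑ d, A d (ρ (σ d)) := rfl
        rw [hWdef]
        simp only
        rw [Finset.sum_sub_distrib, h1, h2]
        linarith
      obtain ⟨π, hπ⟩ := exists_potential W hdiag hperm
      obtain ⟨bs, -, hbs⟩ := Finset.exists_max_image Finset.univ
        (fun p : Fin m × Fin n => v p.1 p.2) ⟨(hm.some, hn.some), Finset.mem_univ _⟩
      obtain ⟨dm, -, hdm⟩ := Finset.exists_max_image Finset.univ
        (fun d : Fin l => A d (σ d)) ⟨⟨0, hl⟩, Finset.mem_univ _⟩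
      obtain ⟨xm, -, hxm⟩ := Finset.exists_min_image Finset.univ π
        ⟨σ ⟨0, hl⟩, Finset.mem_univ _⟩
      set VM := v bs.1 bs.2 with hVM
      set AM := A dm (σ dm) with hAM
      set PM := π xm with hPM
      have hVM0 : 0 ≤ VM := hv bs.1 bs.2
      set M : ℝ := VM + AM - PM with hM
      set w : (Fin m × Fin n) → ℝ :=
        fun o => if h : o ∈ Ω then M + π ⟨o, h⟩ else 0 with hw
      set y : (Fin m × Fin n) → Fin l → Bool :=
        fun o d => decide ((σ d : Fin m × Fin n) = o) with hy
      have hymem : ∀ o d, y o d = true ↔ (σ d : Fin m × Fin n) = o := by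
        intro o d
        rw [hy]
        exact decide_eq_true_iff
      have hwmem : ∀ x : V, w x.1 = M + π x := by
        intro x
        rw [hw]
        simp only
        rw [dif_pos x.2]
      have hU : ∀ d : Fin l, VM ≤ M + π (σ d) - A d (σ d) := by
        intro d
        have h1 : A d (σ d) ≤ AM := hdm d (Finset.mem_univ _)
        have h2 : PM ≤ π (σ d) := hxm (σ d) (Finset.mem_univ _)
        rw [hM]
        linarith
      have hBR : ∀ (d : Fin l) (o' : Fin m × Fin n),
          w o' - c d o'.1 o'.2 ≤ M + π (σ d) - A d (σ d) := by
        intro d o'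
        by_cases ho' : o' ∈ Ω
        · have hkey : π ⟨o', ho'⟩ ≤ π (σ d) + W (σ d) ⟨o', ho'⟩ := hπ (σ d) ⟨o', ho'⟩
          have hWval : W (σ d) ⟨o', ho'⟩ = A d ⟨o', ho'⟩ - A d (σ d) := by
            rw [hWdef]
            simp
          have hA : A d ⟨o', ho'⟩ = c d o'.1 o'.2 := rfl
          rw [hwmem ⟨o', ho'⟩]
          rw [hWval, hA] at hkey
          linarith
        · have : w o' = 0 := dif_neg ho'
          rw [this]
          have h1 := hc d o'.1 o'.2
          have h2 := hU d
          linarith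
      refine ⟨w, y, ⟨⟨?_, ?_, ?_, ?_⟩, ?_, ?_, ?_⟩, ?_, ?_, ?_⟩
      · intro d o o' h h'
        rw [hymem] at h h'
        rw [← h, ← h']
      · intro o d d' h h'
        rw [hymem] at h h'
        exact σ.injective (Subtype.coe_injective (h.trans h'.symm))
      · intro o d o' d' h h' hfst
        rw [hymem] at h h'
        rw [← h, ← h'] at hfst ⊢
        exact hΩ.1 _ (σ d).2 _ (σ d').2 hfst
      · intro o d o' d' h h' hsnd
        rw [hymem] at h h'
        rw [← h, ← h'] at hsnd ⊢
        exact hΩ.2 _ (σ d).2 _ (σ d').2 hsnd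
      · -- nonneg compensations
        intro o
        rw [hw]
        simp only
        split
        · rename_i h
          have h2 : PM ≤ π ⟨o, h⟩ := hxm _ (Finset.mem_univ _)
          have h3 : 0 ≤ AM := by rw [hAM]; exact hc _ _ _
          rw [hM]
          linarith
        · exact le_refl 0
      · -- matched couriers take best responses
        intro d o h
        rw [hymem] at h
        subst h
        have hwσ : w (σ d : Fin m × Fin n) = M + π (σ d) := hwmem (σ d)
        have hcσ : c d (σ d : Fin m × Fin n).1 (σ d : Fin m × Fin n).2 = A d (σ d) := rfl
        constructor
        · rw [hwσ, hcσ]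
          have := hU d
          linarith
        · intro o'
          rw [hwσ, hcσ]
          exact hBR d o'
      · -- unmatched couriers: vacuous
        intro d hnone
        exact absurd ((hymem _ d).mpr rfl) (by simpa using hnone (σ d : Fin m × Fin n))
      · -- serves
        intro o
        constructor
        · rintro ⟨d, hd⟩
          rw [hymem] at hd
          rw [← hd]
          exact (σ d).2
        · intro h
          exact ⟨σ.symm ⟨o, h⟩, (hymem _ _).mpr (by simp)⟩
      · -- zero compensation outside Ω
        intro o ho
        exact dif_neg ho
      · -- high utility
        intro d b s
        have hpu : planUtil c w y d = w (σ d : Fin m × Fin n) - A d (σ d) := by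
          unfold planUtil
          refine Finset.sum_eq_single_of_mem ((σ d : Fin m × Fin n))
            (Finset.mem_univ _) ?_ |>.trans (if_pos ((hymem _ _).mpr rfl))
          intro o _ hne'
          rw [if_neg]
          intro hyo
          exact hne' ((hymem _ _).mp hyo).symm
        rw [hpu, hwmem (σ d)]
        have h1 := hU d
        have h2 : v b s ≤ VM := hbs (b, s) (Finset.mem_univ _)
        linarith


end DeliveryPlatform
end
end

section
/- If (p, w, t, x) is a with-tip equilibrium, then there exist purchase prices p' and delivery compensations w' such that (p', w', t', x) is a with-tip equilibrium with all tips zero, t' = 0 (the same allocation x is supported with zero tips). Concretely, one may take p'_s = p_s + t_{bs} and w'_{bs} = w_{bs} + t_{bs} for every delivered order (b,s), and p'_s = 0, w'_{bs} = 0 otherwise. -/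
open scoped Classical
noncomputable section

namespace DeliveryPlatform

variable {m n l : ℕ}

/-- Every with-tip equilibrium allocation is also supported by a
with-tip equilibrium with all tips zero, obtained by folding the tips into the
prices and compensations on delivered orders. -/
theorem zero_tip_equivalence
    (v : Fin m → Fin n → ℝ) (c : Fin l → Fin m → Fin n → ℝ)
    (hv : ∀ b s, 0 ≤ v b s) (hc : ∀ d b s, 0 ≤ c d b s)
    (p : Fin n → ℝ) (w t : Fin m → Fin n → ℝ) (x : Fin m → Fin n → Fin l → Bool)
    (h : WithTipEq v c p w t x) :
    ∃ (p' : Fin n → ℝ) (w' : Fin m → Fin n → ℝ),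
      (∀ b s, (∃ d, x b s d) → p' s = p s + t b s ∧ w' b s = w b s + t b s) ∧
      (∀ s, (∀ b d, ¬ x b s d) → p' s = 0) ∧
      (∀ b s, (∀ d, ¬ x b s d) → w' b s = 0) ∧
      WithTipEq v c p' w' (fun _ _ => 0) x := by
  classical
  obtain ⟨hfeas, hp, hw, ht, hbuy, hunb, hcour, hidle, hps, hws⟩ := h
  set p' : Fin n → ℝ := fun s => if hs : ∃ b d, x b s d then p s + t hs.choose s else 0
    with hp'def
  set w' : Fin m → Fin n → ℝ := fun b s => if ∃ d, x b s d then w b s + t b s else 0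
    with hw'def
  have hund : ∀ b s, (¬ ∃ d, x b s d) → w b s = 0 ∧ t b s = 0 := by
    intro b s hd
    push_neg at hd
    exact hws b s hd
  have hw'eq : ∀ b s, w' b s = w b s + t b s := by
    intro b s
    by_cases hd : ∃ d, x b s d
    · simp only [hw'def, if_pos hd]
    · obtain ⟨h1, h2⟩ := hund b s hd
      simp only [hw'def, if_neg hd, h1, h2, add_zero]
  have hw'nonneg : ∀ b s, 0 ≤ w' b s := by
    intro b s
    rw [hw'eq]
    exact add_nonneg (hw b s) (ht b s)
  have hp'del : ∀ b s, (∃ d, x b s d) → p' s = p s + t b s := by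
    rintro b s ⟨d, hd⟩
    have hs : ∃ b d, x b s d := ⟨b, d, hd⟩
    have hb : hs.choose = b := by
      have h2 := hs.choose_spec.choose_spec
      exact (hfeas.2.1 _ _ _ _ _ h2 hd).1
    simp only [hp'def, dif_pos hs, hb]
  have hp'un : ∀ s, (¬ ∃ b d, x b s d) → p' s = 0 := by
    intro s hs
    simp only [hp'def, dif_neg hs]
  have hp'ge : ∀ s, p s ≤ p' s := by
    intro s
    by_cases hs : ∃ b d, x b s d
    · obtain ⟨b, d, hd⟩ := hs
      rw [hp'del b s ⟨d, hd⟩]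
      linarith [ht b s]
    · rw [hp'un s hs]
      push_neg at hs
      rw [hps s hs]
  -- courier utilities with zero tips equal the original utilities
  have hcu : ∀ d b s, cUtil c w' (fun _ _ => (0:ℝ)) d b s = cUtil c w t d b s := by
    intro d b s
    simp only [cUtil, hw'eq]
    ring
  have hBR : ∀ d b s, InBR c w t d b s → InBR c w' (fun _ _ => (0:ℝ)) d b s := by
    rintro d b s ⟨h1, h2⟩
    exact ⟨by rw [hcu]; exact h1, fun b' s' => by rw [hcu, hcu]; exact h2 b' s'⟩
  -- transfer lemma for tip deviations
  have htrans : ∀ (b : Fin m) (tb : Fin n → ℝ) (d : Fin l) (b1 : Fin m) (s1 : Fin n),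
      cUtil c w' (updateTips (fun _ _ => (0:ℝ)) b tb) d b1 s1
        = cUtil c w (updateTips t b (fun s2 => tb s2 + t b s2)) d b1 s1 := by
    intro b tb d b1 s1
    by_cases hb : b1 = b
    · subst hb
      simp only [cUtil, updateTips, if_pos rfl, eq_self_iff_true, if_true, hw'eq]
      ring
    · simp only [cUtil, updateTips, if_neg hb, hw'eq]
      ring
  have hmt'nonneg : ∀ b s, 0 ≤ minTip c w' (fun _ _ => (0:ℝ)) b s := by
    intro b s
    exact Real.sInf_nonneg (fun τ hτ => hτ.1)
  -- key bound : old minTip ≤ new minTip + old tip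
  have hkey : ∀ b s, minTip c w t b s ≤ minTip c w' (fun _ _ => (0:ℝ)) b s + t b s := by
    intro b s
    rcases isEmpty_or_nonempty (Fin l) with hl | hl
    · have hz : ∀ (w0 t1 : Fin m → Fin n → ℝ), minTip c w0 t1 b s = 0 := by
        intro w0 t1
        have he : {τ : ℝ | 0 ≤ τ ∧ ∃ tb : Fin n → ℝ, (∀ s', 0 ≤ tb s') ∧ tb s = τ ∧
            ∃ d, InBR c w0 (updateTips t1 b tb) d b s} = ∅ := by
          ext τ
          simp only [Set.mem_setOf_eq, Set.mem_empty_iff_false, iff_false, not_and]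
          rintro - ⟨tb, -, -, d, -⟩
          exact hl.false d
        rw [minTip, he, Real.sInf_empty]
      rw [hz, hz]
      simpa using ht b s
    · obtain ⟨d0⟩ := hl
      set M : ℝ := ∑ b1, ∑ s1, w' b1 s1 with hM
      have hMle : ∀ b1 s1, w' b1 s1 ≤ M := by
        intro b1 s1
        calc w' b1 s1 ≤ ∑ s2, w' b1 s2 :=
              Finset.single_le_sum (fun s2 _ => hw'nonneg b1 s2) (Finset.mem_univ s1)
          _ ≤ M := Finset.single_le_sum
              (fun b2 _ => Finset.sum_nonneg fun s2 _ => hw'nonneg b2 s2) (Finset.mem_univ b1)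
      have hM0 : 0 ≤ M := Finset.sum_nonneg fun b2 _ => Finset.sum_nonneg fun s2 _ => hw'nonneg b2 s2
      set τ0 : ℝ := c d0 b s + M with hτ0
      have hτ0nn : 0 ≤ τ0 := add_nonneg (hc d0 b s) hM0
      set tb0 : Fin n → ℝ := fun s1 => if s1 = s then τ0 else 0 with htb0
      have hS'ne : τ0 ∈ {τ : ℝ | 0 ≤ τ ∧ ∃ tb : Fin n → ℝ, (∀ s', 0 ≤ tb s') ∧ tb s = τ ∧
          ∃ d, InBR c w' (updateTips (fun _ _ => (0:ℝ)) b tb) d b s} := by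
        have hub : ∀ b1 s1,
            cUtil c w' (updateTips (fun _ _ => (0:ℝ)) b tb0) d0 b1 s1
              ≤ cUtil c w' (updateTips (fun _ _ => (0:ℝ)) b tb0) d0 b s := by
        -- utility of (b,s) is w' b s + τ0 - c d0 b s = w' b s + M
          intro b1 s1
          have hbs : cUtil c w' (updateTips (fun _ _ => (0:ℝ)) b tb0) d0 b s
              = w' b s + M := by
            simp only [cUtil, updateTips, if_pos rfl, eq_self_iff_true, if_true, htb0, hτ0]
            ring
          rw [hbs]
          by_cases hb1 : b1 = b
          · subst hb1
            by_cases hs1 : s1 = s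
            · subst hs1
              simp only [cUtil, updateTips, if_pos rfl, eq_self_iff_true, if_true, htb0, hτ0]
              linarith
            · simp only [cUtil, updateTips, if_pos rfl, eq_self_iff_true, if_true, htb0,
                if_neg hs1]
              have := hMle b1 s1
              have := hc d0 b1 s1
              have := hw'nonneg b1 s
              linarith
          · simp only [cUtil, updateTips, if_neg hb1]
            have := hMle b1 s1
            have := hc d0 b1 s1
            have := hw'nonneg b s
            linarith
        refine ⟨hτ0nn, tb0, ?_, by simp [htb0], d0, ?_, hub⟩
        · intro s'
          show (0:ℝ) ≤ if s' = s then τ0 else 0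
          split
          · exact hτ0nn
          · exact le_rfl
        · have hbs : cUtil c w' (updateTips (fun _ _ => (0:ℝ)) b tb0) d0 b s
              = w' b s + M := by
            simp only [cUtil, updateTips, if_pos rfl, eq_self_iff_true, if_true, htb0, hτ0]
            ring
          rw [hbs]
          have := hw'nonneg b s
          linarith
      have hbddS : BddBelow {τ : ℝ | 0 ≤ τ ∧ ∃ tb : Fin n → ℝ, (∀ s', 0 ≤ tb s') ∧ tb s = τ ∧
          ∃ d, InBR c w (updateTips t b tb) d b s} := ⟨0, fun y hy => hy.1⟩
      have hmap : ∀ τ ∈ {τ : ℝ | 0 ≤ τ ∧ ∃ tb : Fin n → ℝ, (∀ s', 0 ≤ tb s') ∧ tb s = τ ∧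
          ∃ d, InBR c w' (updateTips (fun _ _ => (0:ℝ)) b tb) d b s},
          τ + t b s ∈ {τ : ℝ | 0 ≤ τ ∧ ∃ tb : Fin n → ℝ, (∀ s', 0 ≤ tb s') ∧ tb s = τ ∧
          ∃ d, InBR c w (updateTips t b tb) d b s} := by
        rintro τ ⟨hτ, tb, htb, htbs, d, hd1, hd2⟩
        refine ⟨by linarith [ht b s], fun s2 => tb s2 + t b s2,
          fun s2 => add_nonneg (htb s2) (ht b s2), by show tb s + t b s = τ + t b s; rw [htbs], d, ?_, ?_⟩
        · rw [← htrans b tb d b s]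
          exact hd1
        · intro b1 s1
          rw [← htrans b tb d b1 s1, ← htrans b tb d b s]
          exact hd2 b1 s1
      have hstep : ∀ τ ∈ {τ : ℝ | 0 ≤ τ ∧ ∃ tb : Fin n → ℝ, (∀ s', 0 ≤ tb s') ∧ tb s = τ ∧
          ∃ d, InBR c w' (updateTips (fun _ _ => (0:ℝ)) b tb) d b s},
          minTip c w t b s ≤ τ + t b s := by
        intro τ hτ
        exact csInf_le hbddS (hmap τ hτ)
      have : minTip c w t b s - t b s ≤ minTip c w' (fun _ _ => (0:ℝ)) b s := by
        apply le_csInf ⟨τ0, hS'ne⟩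
        intro τ hτ
        linarith [hstep τ hτ]
      linarith
  -- new minTip vanishes on delivered orders
  have hmt'zero : ∀ b s d, x b s d → minTip c w' (fun _ _ => (0:ℝ)) b s = 0 := by
    intro b s d hd
    have hup0 : updateTips (fun _ _ => (0:ℝ)) b (fun (_ : Fin n) => (0:ℝ)) = fun (_ : Fin m) (_ : Fin n) => (0:ℝ) := by
      funext b1 s1
      simp [updateTips]
    have h0mem : (0:ℝ) ∈ {τ : ℝ | 0 ≤ τ ∧ ∃ tb : Fin n → ℝ, (∀ s', 0 ≤ tb s') ∧ tb s = τ ∧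
        ∃ d, InBR c w' (updateTips (fun _ _ => (0:ℝ)) b tb) d b s} := by
      refine ⟨le_rfl, fun _ => 0, fun _ => le_rfl, rfl, d, ?_⟩
      rw [hup0]
      exact hBR d b s (hcour d b s hd)
    exact le_antisymm (csInf_le ⟨0, fun y hy => hy.1⟩ h0mem) (hmt'nonneg b s)
  refine ⟨p', w', ?_, ?_, ?_, hfeas, ?_, ?_, fun _ _ => le_rfl, ?_, ?_, ?_, ?_, ?_, ?_⟩
  · rintro b s hd
    exact ⟨hp'del b s hd, by simp only [hw'def, if_pos hd]⟩
  · intro s hs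
    exact hp'un s (by rintro ⟨b, d, hd⟩; exact hs b d hd)
  · intro b s hd
    have hne : ¬ ∃ d, x b s d := by rintro ⟨d, hd'⟩; exact hd d hd'
    simp only [hw'def]
    exact if_neg hne
  · -- prices nonnegative
    intro s
    by_cases hs : ∃ b d, x b s d
    · obtain ⟨b, d, hd⟩ := hs
      rw [hp'del b s ⟨d, hd⟩]
      exact add_nonneg (hp s) (ht b s)
    · rw [hp'un s hs]
  · exact hw'nonneg
  · -- matched buyers
    intro b s hd
    obtain ⟨d, hdd⟩ := hd
    obtain ⟨h1, h2, h3⟩ := hbuy b s ⟨d, hdd⟩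
    have hz : minTip c w' (fun _ _ => (0:ℝ)) b s = 0 := hmt'zero b s d hdd
    have hpd : p' s = p s + t b s := hp'del b s ⟨d, hdd⟩
    refine ⟨by linarith, ?_, by exact hz.symm⟩
    intro s'
    by_cases hss : s' = s
    · subst hss
      exact le_rfl
    · have hnd : ∀ d', ¬ x b s' d' := by
        intro d' hx
        exact hss (hfeas.1 b s d s' d' hdd hx).1.symm
      have ht0 : t b s' = 0 := (hws b s' hnd).2
      have hk := hkey b s'
      have hpg := hp'ge s'
      have := h2 s'
      linarith
  · -- unmatched buyers
    intro b hnb s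
    have ht0 : t b s = 0 := (hws b s (fun d => hnb s d)).2
    have hk := hkey b s
    have hpg := hp'ge s
    have := hunb b hnb s
    linarith
  · -- couriers best respond
    intro d b s hd
    exact hBR d b s (hcour d b s hd)
  · -- idle couriers
    intro d hnd b s
    have h1 := hidle d hnd b s
    have h2 := hcu d b s
    linarith
  · -- unmatched stores
    intro s hs
    exact hp'un s (by rintro ⟨b, d, hd⟩; exact hs b d hd)
  · -- undelivered orders
    intro b s hd
    have hne : ¬ ∃ d, x b s d := by rintro ⟨d, hd'⟩; exact hd d hd'
    refine ⟨?_, rfl⟩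
    simp only [hw'def]
    exact if_neg hne


end DeliveryPlatform
end
end

section
/- Let l ≥ 1 and let T ⊆ B×S×D be a set of hyperedges on finite sets with |B|=|S|=|D|=l. Consider the market on (B,S,D) where every buyer values every store at 1 (v_b(s)=1 for all b,s) and courier costs are c_d(b,s)=0 if (b,s,d) ∈ T and c_d(b,s)=1 otherwise. Then T contains a perfect three-dimensional matching (a subset of T of size l in which each element of B, of S, and of D appears exactly once) if and only if there exists a with-tip equilibrium of this market whose allocation has welfare l. (This is the reduction establishing that computing the optimal with-tip equilibrium welfare is NP-hard.) -/
open scoped Classical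
noncomputable section

namespace DeliveryPlatform

variable {m n l : ℕ}

/-- A perfect three-dimensional matching within the hyperedge set `T`. -/
def HasPerfectMatching (l : ℕ) (T : Finset (Fin l × Fin l × Fin l)) : Prop :=
  ∃ M : Finset (Fin l × Fin l × Fin l), M ⊆ T ∧ M.card = l ∧
    ∀ e ∈ M, ∀ e' ∈ M,
      (e.1 = e'.1 ∨ e.2.1 = e'.2.1 ∨ e.2.2 = e'.2.2) → e = e'

section NPhardAux

variable {l : ℕ}

/-- The cost function of the reduction. -/
private def cT (T : Finset (Fin l × Fin l × Fin l)) : Fin l → Fin l → Fin l → ℝ :=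
  fun d b s => if (b, s, d) ∈ T then (0 : ℝ) else 1

private lemma cT_nonneg (T : Finset (Fin l × Fin l × Fin l)) (d b s : Fin l) :
    0 ≤ cT T d b s := by
  unfold cT; split <;> norm_num

private lemma cT_le_one (T : Finset (Fin l × Fin l × Fin l)) (d b s : Fin l) :
    cT T d b s ≤ 1 := by
  unfold cT; split <;> norm_num

/-- The minTip set (with `w = t = 0`) contains, for any courier `d`, the value
`cT T d b s`. -/
private lemma mem_tipSet (T : Finset (Fin l × Fin l × Fin l)) (b s d : Fin l) :
    cT T d b s ∈ {τ : ℝ | 0 ≤ τ ∧ ∃ tb : Fin l → ℝ, (∀ s', 0 ≤ tb s') ∧ tb s = τ ∧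
      ∃ d', InBR (cT T) (fun _ _ => 0) (updateTips (fun _ _ => 0) b tb) d' b s} := by
  refine ⟨cT_nonneg T d b s, fun s' => if s' = s then cT T d b s else 0,
    fun s' => ?_, by simp, d, ?_, ?_⟩
  · by_cases hs : s' = s
    · simpa [hs] using cT_nonneg T d b s
    · simp [hs]
  · simp [cUtil, updateTips, cT]
  · intro b' s'
    have h1 := cT_nonneg T d b' s'
    by_cases hb : b' = b
    · by_cases hs : s' = s
      · subst hb; subst hs; exact le_rfl
      · subst hb
        simp only [cUtil, updateTips, if_pos rfl, if_neg hs, if_true, zero_add]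
        linarith
    · simp only [cUtil, updateTips, if_pos rfl, if_neg hb, if_true, zero_add]
      linarith

private lemma minTip_nonneg (T : Finset (Fin l × Fin l × Fin l)) (hl : 1 ≤ l)
    (b s : Fin l) :
    0 ≤ minTip (cT T) (fun _ _ => 0) (fun _ _ => 0) b s := by
  apply le_csInf ⟨_, mem_tipSet T b s ⟨0, hl⟩⟩
  exact fun τ hτ => hτ.1

private lemma minTip_eq_zero (T : Finset (Fin l × Fin l × Fin l)) (hl : 1 ≤ l)
    {b s d : Fin l} (h : (b, s, d) ∈ T) :
    minTip (cT T) (fun _ _ => 0) (fun _ _ => 0) b s = 0 := by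
  refine le_antisymm ?_ (minTip_nonneg T hl b s)
  have h0 : cT T d b s = 0 := if_pos h
  have := mem_tipSet T b s d
  rw [h0] at this
  exact csInf_le ⟨0, fun τ hτ => hτ.1⟩ this

end NPhardAux

/-- `T` contains a perfect three-dimensional matching iff the
associated market (unit valuations, costs `0` on hyperedges of `T` and `1`
otherwise) has a with-tip equilibrium whose allocation has welfare `l`. -/
theorem three_dm_iff_with_tip_eq_welfare
    (l : ℕ) (hl : 1 ≤ l) (T : Finset (Fin l × Fin l × Fin l)) :
    HasPerfectMatching l T ↔
      ∃ (p : Fin l → ℝ) (w t : Fin l → Fin l → ℝ)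
        (x : Fin l → Fin l → Fin l → Bool),
        WithTipEq (fun _ _ => (1 : ℝ))
          (fun d b s => if (b, s, d) ∈ T then (0 : ℝ) else 1) p w t x ∧
        Welfare (fun _ _ => (1 : ℝ))
          (fun d b s => if (b, s, d) ∈ T then (0 : ℝ) else 1) x = (l : ℝ) := by
  have hcdef : (fun d b s => if (b, s, d) ∈ T then (0 : ℝ) else 1) = cT T := rfl
  constructor
  · -- forward direction
    rintro ⟨M, hMT, hcard, hmatch⟩
    -- projections are injective on M, hence surjective
    have hinj1 : Set.InjOn Prod.fst (M : Set (Fin l × Fin l × Fin l)) := by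
      intro e he e' he' h
      exact hmatch e he e' he' (Or.inl h)
    have hinj3 : Set.InjOn (fun e : Fin l × Fin l × Fin l => e.2.2)
        (M : Set (Fin l × Fin l × Fin l)) := by
      intro e he e' he' h
      exact hmatch e he e' he' (Or.inr (Or.inr h))
    have himg1 : M.image Prod.fst = Finset.univ := by
      apply Finset.eq_univ_of_card
      rw [Finset.card_image_of_injOn hinj1, hcard, Fintype.card_fin]
    have himg3 : M.image (fun e : Fin l × Fin l × Fin l => e.2.2) = Finset.univ := by
      apply Finset.eq_univ_of_card
      rw [Finset.card_image_of_injOn hinj3, hcard, Fintype.card_fin]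
    set x : Fin l → Fin l → Fin l → Bool := fun b s d => decide ((b, s, d) ∈ M) with hxdef
    have hx : ∀ b s d, x b s d = true ↔ (b, s, d) ∈ M := by
      intro b s d; simp [hxdef]
    refine ⟨fun _ => 0, fun _ _ => 0, fun _ _ => 0, x, ⟨?_, ?_, ?_, ?_, ?_, ?_, ?_, ?_, ?_, ?_⟩, ?_⟩
    · -- Feasible
      refine ⟨?_, ?_, ?_⟩
      · intro b s d s' d' h h'
        have := hmatch _ ((hx b s d).1 h) _ ((hx b s' d').1 h') (Or.inl rfl)
        simpa [Prod.ext_iff] using this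
      · intro b s d b' d' h h'
        have := hmatch _ ((hx b s d).1 h) _ ((hx b' s d').1 h') (Or.inr (Or.inl rfl))
        simpa [Prod.ext_iff] using this
      · intro b s d b' s' h h'
        have := hmatch _ ((hx b s d).1 h) _ ((hx b' s' d).1 h') (Or.inr (Or.inr rfl))
        simpa [Prod.ext_iff] using this
    · exact fun _ => le_rfl
    · exact fun _ _ => le_rfl
    · exact fun _ _ => le_rfl
    · -- matched buyers
      rintro b s ⟨d, hd⟩
      have hmem : (b, s, d) ∈ T := hMT ((hx b s d).1 hd)
      rw [hcdef]
      have h0 : minTip (cT T) (fun _ _ => 0) (fun _ _ => 0) b s = 0 :=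
        minTip_eq_zero T hl hmem
      refine ⟨by rw [h0]; norm_num, fun s' => ?_, by rw [h0]⟩
      have := minTip_nonneg T hl b s'
      rw [h0]; linarith
    · -- unmatched buyers: impossible
      intro b hb
      exfalso
      have : b ∈ M.image Prod.fst := by rw [himg1]; exact Finset.mem_univ b
      obtain ⟨e, he, he1⟩ := Finset.mem_image.1 this
      exact hb e.2.1 e.2.2 (by rw [hx]; rw [← he1]; exact he)
    · -- matched couriers
      intro d b s hd
      have hmem : (b, s, d) ∈ T := hMT ((hx b s d).1 hd)
      rw [hcdef]
      constructor
      · simp [cUtil, cT, if_pos hmem]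
      · intro b' s'
        have h1 := cT_nonneg T d b' s'
        have h2 : cT T d b s = 0 := if_pos hmem
        simp only [cUtil]
        linarith
    · -- unmatched couriers: impossible
      intro d hd
      exfalso
      have : d ∈ M.image (fun e : Fin l × Fin l × Fin l => e.2.2) := by
        rw [himg3]; exact Finset.mem_univ d
      obtain ⟨e, he, he3⟩ := Finset.mem_image.1 this
      exact hd e.1 e.2.1 (by rw [hx]; rw [← he3]; exact he)
    · intro s _; rfl
    · intro b s _; exact ⟨rfl, rfl⟩
    · -- welfare computation
      rw [hcdef]
      unfold Welfare
      have hterm : ∀ b s d : Fin l,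
          (if x b s d then (1 : ℝ) - cT T d b s else 0) =
          (if (b, s, d) ∈ M then (1 : ℝ) else 0) := by
        intro b s d
        by_cases h : (b, s, d) ∈ M
        · rw [if_pos ((hx b s d).2 h), if_pos h]
          have : cT T d b s = 0 := if_pos (hMT h)
          rw [this]; ring
        · rw [if_neg (by rw [hx]; exact h), if_neg h]
      calc (∑ b, ∑ s, ∑ d, if x b s d then (1 : ℝ) - cT T d b s else 0)
          = ∑ b, ∑ s, ∑ d, if (b, s, d) ∈ M then (1 : ℝ) else 0 := by
            simp_rw [hterm]
        _ = ∑ e : Fin l × Fin l × Fin l, if e ∈ M then (1 : ℝ) else 0 := by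
            rw [Fintype.sum_prod_type]
            congr 1; ext b
            rw [Fintype.sum_prod_type]
        _ = ∑ e ∈ M, (1 : ℝ) := by
            rw [Finset.sum_ite_mem, Finset.univ_inter]
        _ = (l : ℝ) := by
            rw [Finset.sum_const, hcard]; simp
  · -- backward direction
    rintro ⟨p, w, t, x, heq, hW⟩
    obtain ⟨hfeas, -⟩ := heq
    set M : Finset (Fin l × Fin l × Fin l) :=
      Finset.univ.filter (fun e => x e.1 e.2.1 e.2.2 = true) with hMdef
    have hxM : ∀ e : Fin l × Fin l × Fin l, e ∈ M ↔ x e.1 e.2.1 e.2.2 = true := by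
      intro e; simp [hMdef]
    -- welfare equals sum over M
    have hWM : Welfare (fun _ _ => (1 : ℝ)) (cT T) x
        = ∑ e ∈ M, ((1 : ℝ) - cT T e.2.2 e.1 e.2.1) := by
      unfold Welfare
      rw [hMdef, Finset.sum_filter]
      rw [Fintype.sum_prod_type]
      congr 1; ext b
      rw [Fintype.sum_prod_type]
    rw [hcdef] at hW
    rw [hWM] at hW
    -- card M ≤ l
    have hinj1 : Set.InjOn Prod.fst (M : Set (Fin l × Fin l × Fin l)) := by
      intro e he e' he' h
      have hxe := (hxM e).1 (by simpa using he)
      have hxe' := (hxM e').1 (by simpa using he')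
      rw [← h] at hxe'
      obtain ⟨hs, hd⟩ := hfeas.1 e.1 e.2.1 e.2.2 e'.2.1 e'.2.2 hxe hxe'
      exact Prod.ext h (Prod.ext hs hd)
    have hcard_le : M.card ≤ l := by
      have := Finset.card_le_card_of_injOn Prod.fst
        (fun e _ => Finset.mem_univ e.1) hinj1
      simpa using this
    -- sums
    have hsplit : ∑ e ∈ M, ((1 : ℝ) - cT T e.2.2 e.1 e.2.1)
        = (M.card : ℝ) - ∑ e ∈ M, cT T e.2.2 e.1 e.2.1 := by
      rw [Finset.sum_sub_distrib, Finset.sum_const]; simp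
    have hcnn : 0 ≤ ∑ e ∈ M, cT T e.2.2 e.1 e.2.1 :=
      Finset.sum_nonneg fun e _ => cT_nonneg T e.2.2 e.1 e.2.1
    rw [hsplit] at hW
    have hcard_ge : (l : ℝ) ≤ (M.card : ℝ) := by linarith
    have hcard_eq : M.card = l := by
      have h1 : (M.card : ℝ) ≤ (l : ℝ) := by exact_mod_cast hcard_le
      have h2 : (M.card : ℝ) = (l : ℝ) := le_antisymm h1 hcard_ge
      exact_mod_cast h2
    have hsum0 : ∑ e ∈ M, cT T e.2.2 e.1 e.2.1 = 0 := by
      rw [hcard_eq] at hW; linarith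
    have hzero : ∀ e ∈ M, cT T e.2.2 e.1 e.2.1 = 0 :=
      (Finset.sum_eq_zero_iff_of_nonneg fun e _ => cT_nonneg T e.2.2 e.1 e.2.1).1 hsum0
    have hMT : M ⊆ T := by
      intro e he
      have := hzero e he
      by_contra hcon
      rw [cT, if_neg (by simpa using hcon)] at this
      norm_num at this
    refine ⟨M, hMT, hcard_eq, ?_⟩
    intro e he e' he' hshare
    have hxe := (hxM e).1 he
    have hxe' := (hxM e').1 he'
    rcases hshare with h | h | h
    · rw [← h] at hxe'
      obtain ⟨hs, hd⟩ := hfeas.1 e.1 e.2.1 e.2.2 e'.2.1 e'.2.2 hxe hxe'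
      exact Prod.ext h (Prod.ext hs hd)
    · rw [← h] at hxe'
      obtain ⟨hb, hd⟩ := hfeas.2.1 e.1 e.2.1 e.2.2 e'.1 e'.2.2 hxe hxe'
      exact Prod.ext hb (Prod.ext h hd)
    · rw [← h] at hxe'
      obtain ⟨hb, hs⟩ := hfeas.2.2 e.1 e.2.1 e.2.2 e'.1 e'.2.1 hxe hxe'
      exact Prod.ext hb (Prod.ext hs h)

end DeliveryPlatform
end
end

section
/- Let l ≥ 1 and let T ⊆ B×S×D be a set of hyperedges on finite sets with |B|=|S|=|D|=l. Consider the market on (B,S,D) where every buyer values every store at 1 (v_b(s)=1 for all b,s) and courier costs are c_d(b,s)=0 if (b,s,d) ∈ T and c_d(b,s)=1 otherwise. Then T contains a perfect three-dimensional matching (a subset of T of size l in which each element of B, of S, and of D appears exactly once) if and only if the optimal welfare OPT of this market equals l. (This is the reduction establishing that computing the optimal welfare is NP-hard.) -/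
open scoped Classical
noncomputable section

namespace DeliveryPlatform

variable {m n l : ℕ}

lemma welfare_eq_sum (v : Fin m → Fin n → ℝ) (c : Fin l → Fin m → Fin n → ℝ)
    (x : Fin m → Fin n → Fin l → Bool) :
    Welfare v c x = ∑ e ∈ Finset.univ.filter
        (fun e : Fin m × Fin n × Fin l => x e.1 e.2.1 e.2.2 = true),
      (v e.1 e.2.1 - c e.2.2 e.1 e.2.1) := by
  simp only [Welfare, Finset.sum_filter, Fintype.sum_prod_type]

/-- `T` contains a perfect three-dimensional matching iff the
optimal welfare of the associated market equals `l`. -/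
theorem three_dm_iff_opt_welfare
    (l : ℕ) (hl : 1 ≤ l) (T : Finset (Fin l × Fin l × Fin l)) :
    HasPerfectMatching l T ↔
      OPT (fun _ _ => (1 : ℝ))
        (fun d b s : Fin l => if (b, s, d) ∈ T then (0 : ℝ) else 1) = (l : ℝ) := by
  classical
  set v : Fin l → Fin l → ℝ := fun _ _ => 1 with hv
  set c : Fin l → Fin l → Fin l → ℝ := fun d b s => if (b, s, d) ∈ T then (0 : ℝ) else 1
    with hc
  set R : Set ℝ := {r : ℝ | ∃ x, Feasible x ∧ Welfare v c x = r} with hR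
  -- welfare of any allocation as a cardinality
  have key : ∀ x : Fin l → Fin l → Fin l → Bool,
      Welfare v c x = (((Finset.univ.filter
        (fun e : Fin l × Fin l × Fin l => x e.1 e.2.1 e.2.2 = true)).filter
          (· ∈ T)).card : ℝ) := by
    intro x
    rw [welfare_eq_sum]
    have hcast : ((((Finset.univ.filter
        (fun e : Fin l × Fin l × Fin l => x e.1 e.2.1 e.2.2 = true)).filter
          (· ∈ T)).card) : ℝ) = ∑ e ∈ (Finset.univ.filter
        (fun e : Fin l × Fin l × Fin l => x e.1 e.2.1 e.2.2 = true)),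
          (if e ∈ T then (1 : ℝ) else 0) := by
      rw [← Finset.sum_filter]
      simp
    rw [hcast]
    refine Finset.sum_congr rfl fun e _ => ?_
    by_cases h : e ∈ T <;> simp [hv, hc, h]
  -- cardinality bound for feasible allocations
  have cardBound : ∀ x : Fin l → Fin l → Fin l → Bool, Feasible x →
      (Finset.univ.filter
        (fun e : Fin l × Fin l × Fin l => x e.1 e.2.1 e.2.2 = true)).card ≤ l := by
    intro x hF
    have hinj : Set.InjOn Prod.fst ((Finset.univ.filter
        (fun e : Fin l × Fin l × Fin l => x e.1 e.2.1 e.2.2 = true) :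
          Finset (Fin l × Fin l × Fin l)) : Set (Fin l × Fin l × Fin l)) := by
      intro e he e' he' h
      simp only [Finset.coe_filter, Set.mem_setOf_eq] at he he'
      obtain ⟨h1, h2⟩ := hF.1 e.1 e.2.1 e.2.2 e'.2.1 e'.2.2 he.2 (by rw [h]; exact he'.2)
      exact Prod.ext h (Prod.ext h1 h2)
    have := Finset.card_le_card_of_injOn (t := (Finset.univ : Finset (Fin l)))
      Prod.fst (fun _ _ => Finset.mem_univ _) hinj
    simpa using this
  -- welfare bound
  have wBound : ∀ r ∈ R, r ≤ (l : ℝ) := by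
    rintro r ⟨x, hF, rfl⟩
    rw [key x]
    have := le_trans (Finset.card_le_card (Finset.filter_subset (· ∈ T) _)) (cardBound x hF)
    exact_mod_cast this
  have hne : R.Nonempty := by
    refine ⟨0, fun _ _ _ => false, ?_, by simp [Welfare]⟩
    refine ⟨?_, ?_, ?_⟩ <;> intro b s d <;> simp
  have hfin : R.Finite := by
    apply Set.Finite.subset (Set.finite_range (Welfare v c))
    rintro r ⟨x, _, rfl⟩; exact ⟨x, rfl⟩
  constructor
  · rintro ⟨M, hMT, hMcard, hMmatch⟩
    apply le_antisymm (csSup_le hne wBound)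
    apply le_csSup ⟨(l : ℝ), wBound⟩
    refine ⟨fun b s d => decide ((b, s, d) ∈ M), ?_, ?_⟩
    · refine ⟨?_, ?_, ?_⟩
      · intro b s d s' d' h h'
        simp only [decide_eq_true_eq] at h h'
        have := hMmatch _ h _ h' (Or.inl rfl)
        exact ⟨congrArg (fun e => e.2.1) this, congrArg (fun e => e.2.2) this⟩
      · intro b s d b' d' h h'
        simp only [decide_eq_true_eq] at h h'
        have := hMmatch _ h _ h' (Or.inr (Or.inl rfl))
        exact ⟨congrArg (fun e => e.1) this, congrArg (fun e => e.2.2) this⟩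
      · intro b s d b' s' h h'
        simp only [decide_eq_true_eq] at h h'
        have := hMmatch _ h _ h' (Or.inr (Or.inr rfl))
        exact ⟨congrArg (fun e => e.1) this, congrArg (fun e => e.2.1) this⟩
    · rw [key]
      have h1 : (Finset.univ.filter
          (fun e : Fin l × Fin l × Fin l => decide ((e.1, e.2.1, e.2.2) ∈ M) = true)) = M := by
        ext e; simp
      rw [h1, Finset.filter_true_of_mem (fun e he => hMT he), hMcard]
  · intro hOPT
    have hmem : sSup R ∈ R := hne.csSup_mem hfin
    have hOPT' : sSup R = (l : ℝ) := hOPT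
    rw [hOPT'] at hmem
    obtain ⟨x, hF, hW⟩ := hmem
    set M : Finset (Fin l × Fin l × Fin l) := Finset.univ.filter
      (fun e : Fin l × Fin l × Fin l => x e.1 e.2.1 e.2.2 = true) with hM
    have hcardT : (M.filter (· ∈ T)).card = l := by
      have := hW
      rw [key x] at this
      exact_mod_cast this
    have hMle : M.card ≤ l := cardBound x hF
    have hle : (M.filter (· ∈ T)).card ≤ M.card := Finset.card_le_card (Finset.filter_subset _ _)
    have hMcard : M.card = l := le_antisymm hMle (by omega)
    have hfilt : M.filter (· ∈ T) = M :=
      Finset.eq_of_subset_of_card_le (Finset.filter_subset _ _) (by rw [hcardT, hMcard])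
    have hMT : M ⊆ T := fun e he => (Finset.filter_eq_self.mp hfilt) e he
    refine ⟨M, hMT, hMcard, ?_⟩
    intro e he e' he' hshare
    have hxe : x e.1 e.2.1 e.2.2 = true := by
      rw [hM] at he; simpa using he
    have hxe' : x e'.1 e'.2.1 e'.2.2 = true := by
      rw [hM] at he'; simpa using he'
    rcases hshare with h | h | h
    · obtain ⟨h1, h2⟩ := hF.1 e.1 e.2.1 e.2.2 e'.2.1 e'.2.2 hxe (by rw [h]; exact hxe')
      exact Prod.ext h (Prod.ext h1 h2)
    · obtain ⟨h1, h2⟩ := hF.2.1 e.1 e.2.1 e.2.2 e'.1 e'.2.2 hxe (by rw [h]; exact hxe')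
      exact Prod.ext h1 (Prod.ext h h2)
    · obtain ⟨h1, h2⟩ := hF.2.2 e.1 e.2.1 e.2.2 e'.1 e'.2.1 hxe (by rw [h]; exact hxe')
      exact Prod.ext h1 (Prod.ext h2 h)

end DeliveryPlatform
end
end
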